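/- Let a and b be integers with 2 ≤ b < a, gcd(a, b) = 1, and d := a·b not a perfect square. Let T be the minimal period of the continued fraction of √d, (u_n), (v_n) the associated sequences, p_n/q_n the convergents of √d, and set N = T/2 when T is even. Then the equation a·x² − b·y² = 1 has a solution (x, y) ∈ ℕ² if and only if T ≡ 2 (mod 4), v_N = b, and v_N divides u_N; and in that case the set of solutions is exactly { (q_{N−1+ℓT}, p_{N−1+ℓT}/b) : ℓ ∈ ℕ } (each p_{N−1+ℓT} being divisible by b). -/

import Mathlib

/-- The complete quotients of a real number `x`:
`cq x 0 = x` and `cq x (n+1) = 1 / (cq x n - ⌊cq x n⌋)`. -/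
noncomputable def cq (x : ℝ) : ℕ → ℝ
  | 0 => x
  | n + 1 => (Int.fract (cq x n))⁻¹

/-- The partial quotients of a real number `x`: `pq x n = ⌊cq x n⌋`. -/
noncomputable def pq (x : ℝ) (n : ℕ) : ℤ := ⌊cq x n⌋

lemma cq_zero (x : ℝ) : cq x 0 = x := rfl
lemma cq_succ (x : ℝ) (n : ℕ) : cq x (n+1) = (Int.fract (cq x n))⁻¹ := rfl

lemma cq_shift (x : ℝ) (k n : ℕ) : cq x (k + n) = cq (cq x k) n := by
  induction n with
  | zero => rfl
  | succ n ih => rw [← Nat.add_assoc, cq_succ, ih, cq_succ]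

lemma irr_cq {x : ℝ} (hx : Irrational x) (n : ℕ) : Irrational (cq x n) := by
  induction n with
  | zero => exact hx
  | succ n ih =>
      rw [cq_succ]
      have h1 : Irrational (Int.fract (cq x n)) := by
        unfold Int.fract
        exact ih.sub_intCast _
      exact h1.inv

lemma cq_one_lt {x : ℝ} (hx : Irrational x) (n : ℕ) : 1 < cq x (n + 1) := by
  rw [cq_succ]
  have h0 : Int.fract (cq x n) ≠ 0 := by
    have := (irr_cq hx n).ne_int ⌊cq x n⌋
    intro h
    apply this
    unfold Int.fract at h
    linarith [sub_eq_zero.mp h]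
  have h1 : 0 < Int.fract (cq x n) := lt_of_le_of_ne (Int.fract_nonneg _) (Ne.symm h0)
  have h2 : Int.fract (cq x n) < 1 := Int.fract_lt_one _
  exact (one_lt_inv₀ h1).mpr h2

lemma fract_cq_pos {x : ℝ} (hx : Irrational x) (n : ℕ) : 0 < Int.fract (cq x n) := by
  have h0 : Int.fract (cq x n) ≠ 0 := by
    have := (irr_cq hx n).ne_int ⌊cq x n⌋
    intro h
    apply this
    unfold Int.fract at h
    linarith [sub_eq_zero.mp h]
  exact lt_of_le_of_ne (Int.fract_nonneg _) (Ne.symm h0)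

lemma pq_pos {x : ℝ} (hx : Irrational x) (n : ℕ) : 1 ≤ pq x (n + 1) := by
  have := cq_one_lt hx n
  unfold pq
  exact Int.le_floor.mpr (by exact_mod_cast this.le)

/-- All data and hypotheses of the problem bundled together. -/
structure St where
  a : ℕ
  b : ℕ
  hb2 : 2 ≤ b
  hba : b < a
  hcop : Nat.Coprime a b
  d : ℕ
  hdab : d = a * b
  hd : ¬ IsSquare d
  aq : ℕ → ℤ
  aq' : ℕ → ℤ
  haq : ∀ n, aq n = pq (Real.sqrt d) n
  haq'0 : aq' 0 = 2 * aq 0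
  haq' : ∀ n, 1 ≤ n → aq' n = aq n
  u : ℕ → ℤ
  v : ℕ → ℤ
  hu0 : u 0 = aq 0
  hv0 : v 0 = 1
  hupos : ∀ n, 0 < u n
  hvpos : ∀ n, 0 < v n
  hu : ∀ n, u (n + 1) = aq' n * v n - u n
  hv : ∀ n, v n * v (n + 1) = (d : ℤ) - (u (n + 1)) ^ 2
  P : ℕ → ℤ
  Q : ℕ → ℤ
  hP0 : P 0 = 0
  hP1 : P 1 = 1
  hQ0 : Q 0 = 1
  hQ1 : Q 1 = 0
  hP : ∀ n, P (n + 2) = aq n * P (n + 1) + P n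
  hQ : ∀ n, Q (n + 2) = aq n * Q (n + 1) + Q n
  T : ℕ
  hT : 1 ≤ T
  hper : ∀ n, 1 ≤ n → pq (Real.sqrt d) (n + T) = pq (Real.sqrt d) n
  hmin : ∀ T', 1 ≤ T' →
      (∀ n, 1 ≤ n → pq (Real.sqrt d) (n + T') = pq (Real.sqrt d) n) → T ≤ T'

namespace St

variable (s : St)

noncomputable def ξ : ℝ := Real.sqrt s.d

lemma d_ge : 6 ≤ s.d := by
  have := s.hb2; have := s.hba; have := s.hdab
  nlinarith [s.hdab ▸ Nat.mul_le_mul (Nat.succ_le_of_lt s.hba) le_rfl]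

lemma irr : Irrational s.ξ := irrational_sqrt_natCast_iff.mpr s.hd

lemma xi_pos : 0 < s.ξ := Real.sqrt_pos.mpr (by have := s.d_ge; positivity)

lemma xi_sq : s.ξ ^ 2 = (s.d : ℝ) := Real.sq_sqrt (by positivity)

lemma xi_gt_two : 2 < s.ξ := by
  have h6 : (6:ℝ) ≤ (s.d:ℝ) := by exact_mod_cast s.d_ge
  have h4 : (4:ℕ) < s.d := by have := s.d_ge; omega
  have : (2:ℝ)^2 < (s.d:ℝ) := by norm_num; exact_mod_cast h4
  exact (Real.lt_sqrt (by norm_num)).mpr this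

lemma aq0_floor : s.aq 0 = ⌊s.ξ⌋ := by rw [s.haq 0]; rfl

lemma aq0_ge : 2 ≤ s.aq 0 := by
  rw [s.aq0_floor]
  exact Int.le_floor.mpr (by exact_mod_cast s.xi_gt_two.le)

lemma aq_ge (n : ℕ) (hn : 1 ≤ n) : 1 ≤ s.aq n := by
  obtain ⟨m, rfl⟩ := Nat.exists_eq_add_of_le hn
  rw [s.haq]
  simpa [Nat.add_comm 1 m, ξ] using pq_pos s.irr m

lemma aq'_ge (n : ℕ) : 1 ≤ s.aq' n := by
  cases n with
  | zero => rw [s.haq'0]; linarith [s.aq0_ge]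
  | succ n => rw [s.haq' _ (Nat.succ_le_succ (Nat.zero_le n))]; exact s.aq_ge _ (Nat.succ_le_succ (Nat.zero_le n))

lemma vne (n : ℕ) : (s.v n : ℝ) ≠ 0 := by exact_mod_cast (s.hvpos n).ne'

lemma u_lt_xi (n : ℕ) : (s.u n : ℝ) < s.ξ := by
  cases n with
  | zero =>
      rw [s.hu0, s.aq0_floor]
      exact (Int.floor_le s.ξ).lt_of_ne (by simpa using (s.irr.ne_int ⌊s.ξ⌋).symm)
  | succ n =>
      have h := s.hv n
      have h1 : (s.u (n+1))^2 < (s.d : ℤ) := by nlinarith [s.hvpos n, s.hvpos (n+1)]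
      have h2 : ((s.u (n+1) : ℝ))^2 < (s.d : ℝ) := by exact_mod_cast h1
      nlinarith [s.xi_sq, s.xi_pos, s.hupos (n+1), (by exact_mod_cast s.hupos (n+1) : (0:ℝ) < (s.u (n+1) : ℝ))]

lemma u_le_aq0 (n : ℕ) : s.u n ≤ s.aq 0 := by
  rw [s.aq0_floor]
  exact Int.le_floor.mpr (s.u_lt_xi n).le

/-- Reducedness: `√d - u n < v n`. -/
lemma red (n : ℕ) : s.ξ - s.u n < s.v n := by
  induction n with
  | zero =>
      rw [s.hu0, s.hv0, s.aq0_floor]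
      push_cast
      linarith [Int.lt_floor_add_one s.ξ]
  | succ n ih =>
      -- conj identity: ((u (n+1) - ξ)/v (n+1)) * ((u n - ξ)/v n - aq' n) = 1
      have key : ((s.u (n+1) : ℝ) - s.ξ) * ((s.u n - s.ξ) - s.aq' n * s.v n) = s.v n * s.v (n+1) := by
        have hv' : ((s.v n : ℝ)) * (s.v (n+1)) = (s.d : ℝ) - (s.u (n+1))^2 := by exact_mod_cast s.hv n
        have hu' : (s.u (n+1) : ℝ) = s.aq' n * s.v n - s.u n := by exact_mod_cast s.hu n
        have : ((s.u n : ℝ) - s.ξ) - s.aq' n * s.v n = -(s.u (n+1) + s.ξ) := by rw [hu']; ring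
        rw [this, hv', ← s.xi_sq]; ring
      have h1 : ((s.u n : ℝ) - s.ξ) - s.aq' n * s.v n < -s.v n := by
        have := s.u_lt_xi n
        have ha : (1:ℝ) ≤ (s.aq' n : ℝ) := by exact_mod_cast s.aq'_ge n
        have hvp : (0:ℝ) < s.v n := by exact_mod_cast s.hvpos n
        nlinarith
      -- want: ξ - u (n+1) < v (n+1)
      have hvp : (0:ℝ) < s.v n := by exact_mod_cast s.hvpos n
      have hvp' : (0:ℝ) < s.v (n+1) := by exact_mod_cast s.hvpos (n+1)
      by_contra hc
      push_neg at hc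
      -- hc : v (n+1) ≤ ξ - u (n+1), i.e. u(n+1) - ξ ≤ -v(n+1)
      nlinarith [s.u_lt_xi (n+1)]




lemma u1 : s.u 1 = s.aq 0 := by
  have := s.hu 0
  rw [s.hv0, s.haq'0, s.hu0] at this
  linarith

lemma v1 : s.v 1 = (s.d : ℤ) - (s.aq 0)^2 := by
  have := s.hv 0
  rw [s.hv0, s.u1] at this
  linarith

/-- Lemma A: the complete quotients of `√d` in terms of `u` and `v`. -/
lemma cqA : ∀ n, 1 ≤ n → cq s.ξ n = ((s.u n : ℝ) + s.ξ) / s.v n := by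
  intro n hn
  induction n with
  | zero => omega
  | succ n ih =>
      have hfr : ∀ m, Int.fract (cq s.ξ m) = cq s.ξ m - s.aq m := by
        intro m
        rw [Int.fract]
        congr 1
        rw [s.haq m]; rfl
      cases Nat.eq_or_lt_of_le hn with
      | inl h =>
          -- n + 1 = 1
          have hn0 : n = 0 := by omega
          subst hn0
          rw [cq_succ, hfr 0, cq_zero]
          have h1 : s.ξ - (s.aq 0 : ℝ) > 0 := by
            have := s.u_lt_xi 0; rw [s.hu0] at this; linarith
          have h2 : (s.ξ - s.aq 0) * ((s.aq 0 : ℝ) + s.ξ) = s.v 1 := by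
            have : ((s.v 1 : ℝ)) = (s.d : ℝ) - (s.aq 0 : ℝ)^2 := by exact_mod_cast s.v1
            rw [this, ← s.xi_sq]; ring
          rw [eq_div_iff (s.vne 1), inv_mul_eq_div, div_eq_iff (by linarith : s.ξ - (s.aq 0:ℝ) ≠ 0)]
          rw [s.u1]
          linarith [h2]
      | inr h =>
          have hn1 : 1 ≤ n := by omega
          have IH := ih hn1
          rw [cq_succ, hfr n, IH]
          have haqn : s.aq n = s.aq' n := (s.haq' n hn1).symm
          have hvp : (0:ℝ) < s.v n := by exact_mod_cast s.hvpos n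
          have hvp' : (0:ℝ) < s.v (n+1) := by exact_mod_cast s.hvpos (n+1)
          have hu' : (s.u (n+1) : ℝ) = s.aq' n * s.v n - s.u n := by exact_mod_cast s.hu n
          have hfr2 : ((s.u n : ℝ) + s.ξ) / s.v n - s.aq n = (s.ξ - s.u (n+1)) / s.v n := by
            rw [haqn, hu']
            field_simp
            ring
          rw [hfr2]
          have hpos : (0:ℝ) < s.ξ - s.u (n+1) := by linarith [s.u_lt_xi (n+1)]
          have hkey : (s.ξ - s.u (n+1)) * ((s.u (n+1) : ℝ) + s.ξ) = s.v n * s.v (n+1) := by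
            have : ((s.v n : ℝ)) * (s.v (n+1)) = (s.d : ℝ) - (s.u (n+1))^2 := by exact_mod_cast s.hv n
            rw [this, ← s.xi_sq]; ring
          rw [inv_div, div_eq_div_iff hpos.ne' hvp'.ne']
          nlinarith [hkey]

lemma floorA (n : ℕ) : s.aq' n = ⌊((s.u n : ℝ) + s.ξ) / s.v n⌋ := by
  cases n with
  | zero =>
      rw [s.hu0, s.hv0, s.haq'0]
      push_cast
      rw [div_one, Int.floor_intCast_add, s.aq0_floor]
      ring
  | succ n =>
      rw [← s.cqA (n+1) (Nat.succ_le_succ (Nat.zero_le n)), s.haq' _ (Nat.succ_le_succ (Nat.zero_le n)), s.haq]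
      rfl

lemma floor_shift (m : ℕ) : ⌊((s.u (m+1) : ℝ) + s.ξ) / s.v m⌋ = s.aq' m := by
  have hvp : (0:ℝ) < s.v m := by exact_mod_cast s.hvpos m
  have hu' : (s.u (m+1) : ℝ) = s.aq' m * s.v m - s.u m := by exact_mod_cast s.hu m
  have h1 : ((s.u (m+1) : ℝ) + s.ξ) / s.v m = s.aq' m + (s.ξ - s.u m) / s.v m := by
    rw [hu']; field_simp; ring
  rw [h1]
  have h2 : (0:ℝ) ≤ (s.ξ - s.u m) / s.v m := by
    apply div_nonneg _ hvp.le
    linarith [s.u_lt_xi m]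
  have h3 : (s.ξ - s.u m) / s.v m < 1 := by
    rw [div_lt_one hvp]
    linarith [s.red m]
  rw [Int.floor_intCast_add]
  rw [Int.floor_eq_zero_iff.mpr ⟨h2, h3⟩, add_zero]

lemma step_det (m n : ℕ) (hu1 : s.u m = s.u n) (hv1 : s.v m = s.v n) :
    s.u (m+1) = s.u (n+1) ∧ s.v (m+1) = s.v (n+1) := by
  have haq : s.aq' m = s.aq' n := by
    rw [s.floorA m, s.floorA n, hu1, hv1]
  have hu' : s.u (m+1) = s.u (n+1) := by
    rw [s.hu m, s.hu n, haq, hu1, hv1]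
  refine ⟨hu', ?_⟩
  have h1 := s.hv m
  have h2 := s.hv n
  rw [hu', hv1] at h1
  rw [← h2] at h1
  exact (mul_left_cancel₀ (s.hvpos n).ne' h1.symm).symm



lemma rI_II : ∀ n, 1 ≤ n → (s.P (n+1) = s.u n * s.Q (n+1) + s.v n * s.Q n ∧
    (s.d : ℤ) * s.Q (n+1) = s.u n * s.P (n+1) + s.v n * s.P n) := by
  intro n hn
  induction n with
  | zero => omega
  | succ n ih =>
      cases Nat.eq_or_lt_of_le hn with
      | inl h =>
          have hn0 : n = 0 := by omega
          subst hn0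
          have hP2 := s.hP 0
          have hQ2 := s.hQ 0
          rw [s.hP1, s.hP0] at hP2
          rw [s.hQ1, s.hQ0] at hQ2
          constructor
          · rw [show (0:ℕ)+1+1 = 0+2 from rfl, hP2, hQ2, s.u1, s.hQ1, s.v1]; ring
          · rw [show (0:ℕ)+1+1 = 0+2 from rfl, hQ2, hP2, s.u1, s.v1, s.hP1]; ring
      | inr h =>
          have hn1 : 1 ≤ n := by omega
          obtain ⟨hI, hII⟩ := ih hn1
          have haqn := s.haq' n hn1
          have hun := s.hu n
          rw [haqn] at hun
          have hvn := s.hv n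
          have hPn := s.hP n
          have hQn := s.hQ n
          have hvne : s.v n ≠ 0 := (s.hvpos n).ne'
          constructor
          · apply mul_left_cancel₀ hvne
            calc s.v n * s.P (n+1+1)
                = s.v n * s.u (n+1) * s.Q (n+1+1) + ((s.d:ℤ) - s.u (n+1)^2) * s.Q (n+1) := by
                  rw [hPn, hQn, hun]
                  linear_combination (s.aq n * s.v n - s.u n) * hI - hII
              _ = s.v n * (s.u (n+1) * s.Q (n+1+1) + s.v (n+1) * s.Q (n+1)) := by
                  rw [← hvn]; ring
          · apply mul_left_cancel₀ hvne
            calc s.v n * ((s.d:ℤ) * s.Q (n+1+1))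
                = s.v n * s.u (n+1) * s.P (n+1+1) + ((s.d:ℤ) - s.u (n+1)^2) * s.P (n+1) := by
                  rw [hPn, hQn, hun]
                  linear_combination (s.aq n * s.v n - s.u n) * hII - ((s.d:ℤ)) * hI
              _ = s.v n * (s.u (n+1) * s.P (n+1+1) + s.v (n+1) * s.P (n+1)) := by
                  rw [← hvn]; ring

lemma rI (n : ℕ) (hn : 1 ≤ n) : s.P (n+1) = s.u n * s.Q (n+1) + s.v n * s.Q n :=
  (s.rI_II n hn).1

lemma rII (n : ℕ) (hn : 1 ≤ n) : (s.d : ℤ) * s.Q (n+1) = s.u n * s.P (n+1) + s.v n * s.P n :=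
  (s.rI_II n hn).2

lemma detPQ : ∀ n, s.P (n+1) * s.Q n - s.P n * s.Q (n+1) = (-1)^n := by
  intro n
  induction n with
  | zero => rw [s.hP1, s.hP0, s.hQ1, s.hQ0]; ring
  | succ n ih =>
      rw [s.hP n, s.hQ n, pow_succ]
      linear_combination (-1 : ℤ) * ih

lemma key (n : ℕ) : s.P (n+1)^2 - (s.d:ℤ) * s.Q (n+1)^2 = (-1)^n * s.v n := by
  cases Nat.eq_zero_or_pos n with
  | inl h => subst h; rw [s.hP1, s.hQ1, s.hv0]; ring
  | inr h =>
      have hI := s.rI n h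
      have hII := s.rII n h
      have hdet := s.detPQ n
      linear_combination s.P (n+1) * hI - s.Q (n+1) * hII + s.v n * hdet

lemma coprimePQ (n : ℕ) : IsCoprime (s.P (n+1)) (s.Q (n+1)) := by
  refine ⟨(-1)^n * s.Q n, -((-1)^n * s.P n), ?_⟩
  have h2 : ((-1:ℤ))^n * ((-1:ℤ))^n = 1 := by
    rw [← pow_add]; exact Even.neg_one_pow ⟨n, rfl⟩
  linear_combination ((-1:ℤ))^n * s.detPQ n + h2

lemma Ppos : ∀ n, 1 ≤ s.P (n+1) := by
  intro n
  induction n using Nat.strong_induction_on with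
  | _ n ih =>
      match n with
      | 0 => rw [s.hP1]
      | 1 => rw [show (1+1)=2 from rfl, s.hP 0, s.hP1, s.hP0]; linarith [s.aq0_ge]
      | (m+2) =>
          rw [s.hP (m+1)]
          have h1 := ih (m+1) (by omega)
          have h2 : 0 ≤ s.P (m+1) := by
            match m with
            | 0 => rw [s.hP1]; norm_num
            | (k+1) => linarith [ih (k+1) (by omega)]
          nlinarith [s.aq_ge (m+1) (by omega)]

lemma Qpos : ∀ n, 1 ≤ s.Q (n+2) := by
  intro n
  induction n using Nat.strong_induction_on with
  | _ n ih =>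
      match n with
      | 0 => rw [show (0+2)=2 from rfl, s.hQ 0, s.hQ1, s.hQ0]; linarith [s.aq0_ge]
      | (m+1) =>
          rw [s.hQ (m+1)]
          have h1 := ih m (by omega)
          have h2 : 0 ≤ s.Q (m+1) := by
            match m with
            | 0 => rw [s.hQ1]
            | (k+1) => linarith [ih k (by omega)]
          nlinarith [s.aq_ge (m+1) (by omega)]

lemma Qnonneg : ∀ n, 0 ≤ s.Q n := by
  intro n
  match n with
  | 0 => rw [s.hQ0]; norm_num
  | 1 => rw [s.hQ1]
  | (m+2) => linarith [s.Qpos m]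

lemma Pmono : ∀ m n, 1 ≤ m → m < n → s.P (m+1) < s.P (n+1) := by
  intro m n hm hmn
  induction n with
  | zero => omega
  | succ n ih =>
      have step : s.P (n+1) < s.P (n+2) := by
        have hn1 : 1 ≤ n := by omega
        rw [s.hP n]
        have hPn : 1 ≤ s.P n := by
          match n, hn1 with
          | (k+1), _ => exact s.Ppos k
        nlinarith [s.aq_ge n hn1, s.Ppos n]
      rcases Nat.lt_succ_iff_lt_or_eq.mp hmn with h | h
      · exact lt_trans (ih h) step
      · subst h; exact step

lemma Qmono : ∀ m n, 1 ≤ m → m ≤ n → s.Q (m+1) ≤ s.Q (n+1) := by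
  intro m n hm hmn
  induction n with
  | zero => omega
  | succ n ih =>
      rcases Nat.le_succ_iff.mp hmn with h | h
      · have step : s.Q (n+1) ≤ s.Q (n+2) := by
          have hn1 : 1 ≤ n := by omega
          rw [s.hQ n]
          nlinarith [s.aq_ge n hn1, s.Qnonneg n, s.Qnonneg (n+1)]
        exact le_trans (ih h) step
      · subst h; rfl


lemma fract_eq_inv_cq {x : ℝ} (hx : ∀ n, 1 < cq x n) (n : ℕ) :
    Int.fract (cq x n) = (cq x (n+1))⁻¹ := by
  have h := cq_succ x n
  have hne : Int.fract (cq x n) ≠ 0 := by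
    intro h0
    rw [h0] at h
    simp at h
    linarith [hx (n+1), h]
  rw [h, inv_inv]

lemma cf_contraction : ∀ (m : ℕ) (x y : ℝ), (∀ n, 1 < cq x n) → (∀ n, 1 < cq y n) →
    (∀ n, ⌊cq x n⌋ = ⌊cq y n⌋) → |x - y| ≤ ((4:ℝ)^m)⁻¹ := by
  intro m
  induction m with
  | zero =>
      intro x y hx hy hf
      have h0 := hf 0
      have hfx : x - y = Int.fract (cq x 0) - Int.fract (cq y 0) := by
        unfold Int.fract
        rw [h0, cq_zero, cq_zero]
        ring
      rw [cq_zero, cq_zero] at hfx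
      rw [hfx]
      rw [pow_zero, inv_one]
      have := Int.fract_nonneg (cq x 0)
      have := Int.fract_nonneg (cq y 0)
      have := Int.fract_lt_one (cq x 0)
      have := Int.fract_lt_one (cq y 0)
      rw [cq_zero] at *
      rw [abs_le]
      constructor <;> linarith
  | succ m ih =>
      intro x y hx hy hf
      set x1 := cq x 1 with hx1def
      set x2 := cq x 2 with hx2def
      set y1 := cq y 1 with hy1def
      set y2 := cq y 2 with hy2def
      have hx1 : 1 < x1 := hx 1
      have hx2 : 1 < x2 := hx 2
      have hy1 : 1 < y1 := hy 1
      have hy2 : 1 < y2 := hy 2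
      have hxy : x - y = x1⁻¹ - y1⁻¹ := by
        have e1 : Int.fract (cq x 0) = x1⁻¹ := fract_eq_inv_cq hx 0
        have e2 : Int.fract (cq y 0) = y1⁻¹ := fract_eq_inv_cq hy 0
        have h0 := hf 0
        unfold Int.fract at e1 e2
        rw [cq_zero] at e1 e2
        rw [cq_zero, cq_zero] at h0
        rw [← e1, ← e2, h0]
        ring
      have hxy1 : x1 - y1 = x2⁻¹ - y2⁻¹ := by
        have e1 : Int.fract (cq x 1) = x2⁻¹ := fract_eq_inv_cq hx 1
        have e2 : Int.fract (cq y 1) = y2⁻¹ := fract_eq_inv_cq hy 1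
        have h1 := hf 1
        unfold Int.fract at e1 e2
        rw [← e1, ← e2, h1]
        ring
      -- lower bounds on products
      have hx1p : (0:ℝ) < x1 := lt_trans one_pos hx1
      have hx2p : (0:ℝ) < x2 := lt_trans one_pos hx2
      have hy1p : (0:ℝ) < y1 := lt_trans one_pos hy1
      have hy2p : (0:ℝ) < y2 := lt_trans one_pos hy2
      have hbx : 2 ≤ x1 * x2 := by
        have hfl : (1:ℝ) ≤ (⌊x1⌋ : ℝ) := by
          exact_mod_cast Int.le_floor.mpr (by exact_mod_cast hx1.le)
        have hform : x1 = (⌊x1⌋ : ℝ) + x2⁻¹ := by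
          have := fract_eq_inv_cq hx 1
          unfold Int.fract at this
          linarith [this]
        have hinv : x2⁻¹ * x2 = 1 := inv_mul_cancel₀ hx2p.ne'
        nlinarith [hinv, hfl, hx2, hform]
      have hby : 2 ≤ y1 * y2 := by
        have hfl : (1:ℝ) ≤ (⌊y1⌋ : ℝ) := by
          exact_mod_cast Int.le_floor.mpr (by exact_mod_cast hy1.le)
        have hform : y1 = (⌊y1⌋ : ℝ) + y2⁻¹ := by
          have := fract_eq_inv_cq hy 1
          unfold Int.fract at this
          linarith [this]
        have hinv : y2⁻¹ * y2 = 1 := inv_mul_cancel₀ hy2p.ne'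
        nlinarith [hinv, hfl, hy2, hform]
      have e1 : (x - y) * (x1*y1*x2*y2) = x2 - y2 := by
        rw [hxy]
        have h1 : (x1⁻¹ - y1⁻¹) * (x1 * y1) = y1 - x1 := by
          field_simp
        have h2 : (x1 - y1) * (x2 * y2) = y2 - x2 := by
          rw [hxy1]; field_simp
        calc (x1⁻¹ - y1⁻¹) * (x1*y1*x2*y2) = ((x1⁻¹ - y1⁻¹) * (x1 * y1)) * (x2*y2) := by ring
          _ = (y1 - x1) * (x2*y2) := by rw [h1]
          _ = -((x1 - y1) * (x2*y2)) := by ring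
          _ = x2 - y2 := by rw [h2]; ring
      -- apply IH to the shifted tails
      have hIH : |x2 - y2| ≤ ((4:ℝ)^m)⁻¹ := by
        have hshx : ∀ n, cq x2 n = cq x (2 + n) := fun n => (cq_shift x 2 n).symm
        have hshy : ∀ n, cq y2 n = cq y (2 + n) := fun n => (cq_shift y 2 n).symm
        exact ih x2 y2 (fun n => by rw [hshx n]; exact hx (2+n))
          (fun n => by rw [hshy n]; exact hy (2+n))
          (fun n => by rw [hshx n, hshy n]; exact hf (2+n))
      have hprod : (4:ℝ) ≤ x1*y1*x2*y2 := by nlinarith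
      have hprodpos : (0:ℝ) < x1*y1*x2*y2 := by nlinarith
      have habs : |x - y| = |x2 - y2| / (x1*y1*x2*y2) := by
        rw [eq_div_iff hprodpos.ne', ← abs_of_pos hprodpos, ← abs_mul, e1]
      rw [habs]
      calc |x2 - y2| / (x1*y1*x2*y2) ≤ ((4:ℝ)^m)⁻¹ / 4 := by
            apply div_le_div₀ (by positivity) hIH (by norm_num) hprod
        _ = ((4:ℝ)^(m+1))⁻¹ := by rw [pow_succ]; field_simp

lemma cq_gt_one' (n : ℕ) (hn : 1 ≤ n) : 1 < cq s.ξ n := by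
  obtain ⟨m, rfl⟩ := Nat.exists_eq_add_of_le hn
  rw [Nat.add_comm]
  exact cq_one_lt s.irr m

lemma cq_per1 : cq s.ξ (1 + T s) = cq s.ξ 1 := by
  set x := cq s.ξ 1 with hxdef
  set y := cq s.ξ (1 + s.T) with hydef
  have hshx : ∀ n, cq x n = cq s.ξ (1 + n) := fun n => (cq_shift s.ξ 1 n).symm
  have hshy : ∀ n, cq y n = cq s.ξ (1 + s.T + n) := fun n => (cq_shift s.ξ (1 + s.T) n).symm
  have hx : ∀ n, 1 < cq x n := fun n => by rw [hshx n]; exact s.cq_gt_one' _ (by omega)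
  have hy : ∀ n, 1 < cq y n := fun n => by rw [hshy n]; exact s.cq_gt_one' _ (by omega)
  have hfl : ∀ n, ⌊cq y n⌋ = ⌊cq x n⌋ := by
    intro n
    rw [hshx n, hshy n]
    have := s.hper (1 + n) (by omega)
    unfold pq at this
    rw [show 1 + s.T + n = 1 + n + s.T by omega]
    exact this
  have key : ∀ m : ℕ, |y - x| ≤ ((4:ℝ)^m)⁻¹ := fun m => cf_contraction m y x hy hx hfl
  by_contra hne
  have habs : 0 < |y - x| := by
    rw [abs_pos, sub_ne_zero]
    exact fun h => hne h
  obtain ⟨m, hm⟩ := exists_pow_lt_of_lt_one habs (by norm_num : (1/4 : ℝ) < 1)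
  have h2 := key m
  have h3 : ((4:ℝ)^m)⁻¹ = (1/4:ℝ)^m := by rw [← inv_pow]; norm_num
  rw [h3] at h2
  linarith [hm, h2]

lemma match_coeff (p q r t : ℤ) (hq : 0 < q) (ht : 0 < t)
    (h : ((p:ℝ) + s.ξ) / q = ((r:ℝ) + s.ξ) / t) : p = r ∧ q = t := by
  have hq' : ((q:ℝ)) ≠ 0 := by exact_mod_cast hq.ne'
  have ht' : ((t:ℝ)) ≠ 0 := by exact_mod_cast ht.ne'
  have h1 : ((p:ℝ) + s.ξ) * t = ((r:ℝ) + s.ξ) * q := by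
    field_simp at h
    linarith [h]
  have hqt : q = t := by
    by_contra hne
    have hne' : ((q:ℝ)) - t ≠ 0 := by
      intro h0
      apply hne
      exact_mod_cast sub_eq_zero.mp h0
    have hxi : s.ξ = ((p*t - r*q : ℤ) : ℝ) / ((q - t : ℤ) : ℝ) := by
      push_cast
      rw [eq_div_iff (by push_cast at hne' ⊢; exact hne')]
      nlinarith [h1]
    apply s.irr
    rw [hxi]
    exact ⟨((p*t - r*q : ℤ) : ℚ) / ((q - t : ℤ) : ℚ), by push_cast; ring⟩
  refine ⟨?_, hqt⟩
  subst hqt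
  have : ((p:ℝ)) = r := by
    have h2 : ((p:ℝ)) * q = r * q := by nlinarith [h1]
    exact mul_right_cancel₀ hq' h2
  exact_mod_cast this

lemma uv_per1 : s.u (1 + s.T) = s.u 1 ∧ s.v (1 + s.T) = s.v 1 := by
  have h := s.cq_per1
  rw [s.cqA 1 (by omega), s.cqA (1 + s.T) (by omega)] at h
  have := s.match_coeff (s.u (1 + s.T)) (s.v (1 + s.T)) (s.u 1) (s.v 1)
    (s.hvpos _) (s.hvpos _) h
  exact this

lemma state_per (m n : ℕ) (h1 : s.u m = s.u n) (h2 : s.v m = s.v n) :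
    ∀ k, s.u (m + k) = s.u (n + k) ∧ s.v (m + k) = s.v (n + k) := by
  intro k
  induction k with
  | zero => exact ⟨h1, h2⟩
  | succ k ih =>
      have := s.step_det (m + k) (n + k) ih.1 ih.2
      exact ⟨this.1, this.2⟩

lemma uv_perT : ∀ n, 1 ≤ n → s.u (n + s.T) = s.u n ∧ s.v (n + s.T) = s.v n := by
  intro n hn
  obtain ⟨m, rfl⟩ := Nat.exists_eq_add_of_le hn
  have base := s.uv_per1
  have := s.state_per (1 + s.T) 1 base.1 base.2 m
  constructor
  · rw [show 1 + m + s.T = 1 + s.T + m by omega]; exact this.1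
  · rw [show 1 + m + s.T = 1 + s.T + m by omega]; exact this.2

lemma vT : s.v s.T = 1 := by
  have hT1 : s.u (s.T + 1) = s.u 1 := by
    rw [show s.T + 1 = 1 + s.T by omega]; exact (s.uv_per1).1
  have hvT1 : s.v (s.T + 1) = s.v 1 := by
    rw [show s.T + 1 = 1 + s.T by omega]; exact (s.uv_per1).2
  have h := s.hv s.T
  rw [hT1, hvT1] at h
  have h1 := s.hv 0
  rw [s.hv0, one_mul] at h1
  norm_num at h1
  rw [← h1] at h
  exact mul_right_cancel₀ (s.hvpos 1).ne' (h.trans (one_mul (s.v 1)).symm)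

lemma u_eq_a0_of_v_one (n : ℕ) (hvn : s.v n = 1) : s.u n = s.aq 0 := by
  have h1 := s.u_le_aq0 n
  have h2 := s.red n
  rw [hvn] at h2
  push_cast at h2
  -- ξ - u n < 1, so aq0 ≤ ξ < u n + 1
  have h3 : (s.aq 0 : ℝ) < s.u n + 1 := by
    have : (s.aq 0 : ℝ) ≤ s.ξ := by
      rw [s.aq0_floor]; exact Int.floor_le s.ξ
    linarith
  have h4 : s.aq 0 < s.u n + 1 := by exact_mod_cast h3
  omega

lemma uT : s.u s.T = s.u 0 := by
  rw [s.hu0]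
  exact s.u_eq_a0_of_v_one s.T s.vT

lemma uv_per (n : ℕ) : s.u (n + s.T) = s.u n ∧ s.v (n + s.T) = s.v n := by
  cases Nat.eq_zero_or_pos n with
  | inl h => subst h; simpa using ⟨s.uT, by rw [s.vT, s.hv0]⟩
  | inr h => exact s.uv_perT n h

lemma uv_per_mul (k n : ℕ) : s.u (n + k * s.T) = s.u n ∧ s.v (n + k * s.T) = s.v n := by
  induction k with
  | zero => simp
  | succ k ih =>
      have := s.uv_per (n + k * s.T)
      rw [show n + (k+1) * s.T = n + k * s.T + s.T by ring] at *
      exact ⟨by rw [this.1, ih.1], by rw [this.2, ih.2]⟩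

lemma period_of_v_one (n : ℕ) (hn : 1 ≤ n) (hvn : s.v n = 1) : s.T ≤ n := by
  have hun : s.u n = s.u 0 := by rw [s.hu0]; exact s.u_eq_a0_of_v_one n hvn
  have hvn' : s.v n = s.v 0 := by rw [hvn, s.hv0]
  have hst := s.state_per n 0 hun hvn'
  apply s.hmin n hn
  intro m hm
  have h1 := (hst m).1
  have h2 := (hst m).2
  have ha : s.aq' (n + m) = s.aq' (0 + m) := by
    rw [s.floorA (n + m), s.floorA (0 + m), h1, h2]
  rw [Nat.zero_add] at ha
  have e1 : s.aq (n + m) = s.aq m := by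
    rw [← s.haq' (n+m) (by omega), ← s.haq' m hm]; exact ha
  have := e1
  rw [s.haq, s.haq] at this
  rw [show m + n = n + m by omega]
  exact this

lemma v_one_iff (n : ℕ) (hn : 1 ≤ n) : s.v n = 1 ↔ s.T ∣ n := by
  constructor
  · intro hvn
    rcases Nat.eq_zero_or_pos (n % s.T) with h | h
    · exact Nat.dvd_of_mod_eq_zero h
    · exfalso
      have hrep : n % s.T + (n / s.T) * s.T = n := by
        rw [Nat.mod_add_div']
      have hvr : s.v (n % s.T) = 1 := by
        have h5 := (s.uv_per_mul (n / s.T) (n % s.T)).2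
        rw [hrep] at h5
        rw [← h5]
        exact hvn
      have hle := s.period_of_v_one (n % s.T) h hvr
      have hlt : n % s.T < s.T := Nat.mod_lt n (by have := s.hT; omega)
      omega
  · intro hdvd
    obtain ⟨k, rfl⟩ := hdvd
    have h2 := (s.uv_per_mul k 0).2
    rw [show (0:ℕ) + k * s.T = s.T * k by ring] at h2
    rw [h2, s.hv0]

/-- Palindromic symmetry of the period. -/
lemma symm : ∀ n m, n + m = s.T → s.u (m + 1) = s.u n ∧ s.v m = s.v n := by
  intro n
  induction n with
  | zero =>
      intro m hm
      simp at hm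
      subst hm
      constructor
      · rw [show s.T + 1 = 1 + s.T by omega, s.uv_per1.1, s.u1, s.hu0]
      · rw [s.vT, s.hv0]
  | succ n ih =>
      intro m hm
      have hIH := ih (m + 1) (by omega)
      -- hIH : u (m+2) = u n ∧ v (m+1) = v n
      have ha : s.aq' (m + 1) = s.aq' n := by
        have h1 := s.floor_shift (m + 1)
        -- ⌊(u (m+2) + ξ)/v (m+1)⌋ = aq' (m+1)
        rw [hIH.1, hIH.2] at h1
        rw [← h1, s.floorA n]
      have hu' : s.u (m + 1) = s.u (n + 1) := by
        have h1 := s.hu (m + 1)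
        have h2 := s.hu n
        -- u(m+2) = aq'(m+1) v(m+1) - u(m+1); u(n+1) = aq' n * v n - u n
        rw [ha, hIH.2] at h1
        rw [hIH.1] at h1
        -- u n = aq' n * v n - u (m+1)
        omega
      refine ⟨hu', ?_⟩
      have h1 := s.hv m
      have h2 := s.hv n
      rw [hu'] at h1
      rw [← h2] at h1
      rw [hIH.2] at h1
      -- v m * v n = v n * v (n+1)
      rw [mul_comm] at h1
      exact mul_left_cancel₀ (s.hvpos n).ne' h1

noncomputable def zb (n : ℕ) : ℝ := (s.P (n+1) : ℝ) - (s.Q (n+1) : ℝ) * s.ξ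

noncomputable def zp (n : ℕ) : ℝ := (s.P (n+1) : ℝ) + (s.Q (n+1) : ℝ) * s.ξ

lemma zb_zero : s.zb 0 = 1 := by unfold zb; rw [s.hP1, s.hQ1]; push_cast; ring

lemma fract_xi_pos : 0 < s.ξ - (s.aq 0 : ℝ) := by
  have := s.u_lt_xi 0; rw [s.hu0] at this; linarith

lemma zb_step : ∀ n, s.zb n = -cq s.ξ (n+1) * s.zb (n+1) := by
  intro n
  induction n with
  | zero =>
      have hP2 : s.P 2 = s.aq 0 := by
        have h := s.hP 0; rw [s.hP1, s.hP0] at h; norm_num at h; exact h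
      have hQ2 : s.Q 2 = 1 := by
        have h := s.hQ 0; rw [s.hQ1, s.hQ0] at h; norm_num at h; exact h
      unfold zb
      rw [s.hP1, s.hQ1, cq_succ, cq_zero]
      rw [show (1:ℕ)+1 = 2 from rfl, hP2, hQ2]
      have hfr : Int.fract s.ξ = s.ξ - (s.aq 0 : ℝ) := by
        unfold Int.fract; rw [s.aq0_floor]
      rw [hfr]
      have hpos := s.fract_xi_pos
      push_cast
      field_simp
      ring
  | succ n ih =>
      -- goal: zb (n+1) = -cq (n+2) * zb (n+2)
      have hfr : Int.fract (cq s.ξ (n+1)) = cq s.ξ (n+1) - (s.aq (n+1) : ℝ) := by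
        unfold Int.fract
        congr 1
        rw [s.haq (n+1)]; rfl
      have hfrpos : 0 < Int.fract (cq s.ξ (n+1)) := fract_cq_pos s.irr (n+1)
      have hrec : s.zb (n+2) = (s.aq (n+1) : ℝ) * s.zb (n+1) + s.zb n := by
        unfold zb
        rw [show n+2+1 = (n+1)+2 from rfl, s.hP (n+1), s.hQ (n+1)]
        push_cast
        ring
      rw [ih] at hrec
      -- zb (n+2) = (aq (n+1) - cq (n+1)) * zb (n+1)
      have h2 : s.zb (n+2) = -(Int.fract (cq s.ξ (n+1))) * s.zb (n+1) := by
        rw [hrec, hfr]; ring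
      rw [h2, cq_succ]
      field_simp

lemma cq_perm (m : ℕ) (hm : 1 ≤ m) : cq s.ξ (m + s.T) = cq s.ξ m := by
  obtain ⟨k, rfl⟩ := Nat.exists_eq_add_of_le hm
  rw [show 1 + k + s.T = 1 + s.T + k by omega, cq_shift s.ξ (1 + s.T) k, s.cq_per1,
    ← cq_shift s.ξ 1 k]

lemma cq_pos' (n : ℕ) (hn : 1 ≤ n) : 0 < cq s.ξ n := lt_trans one_pos (s.cq_gt_one' n hn)

lemma zb_per : ∀ n, s.zb (n + s.T) = s.zb n * s.zb s.T := by
  intro n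
  induction n with
  | zero => rw [Nat.zero_add, s.zb_zero, one_mul]
  | succ n ih =>
      have h1 := s.zb_step (n + s.T)
      rw [show n + s.T + 1 = n + 1 + s.T by omega, s.cq_perm (n+1) (by omega)] at h1
      have h2 := s.zb_step n
      have hc := s.cq_pos' (n+1) (by omega)
      have hne : -cq s.ξ (n+1) ≠ 0 := by intro h0; rw [neg_eq_zero] at h0; linarith
      have heq : -cq s.ξ (n+1) * s.zb (n+1+s.T) = -cq s.ξ (n+1) * (s.zb (n+1) * s.zb s.T) := by
        rw [← h1]
        rw [ih, h2]
        ring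
      exact mul_left_cancel₀ hne heq

lemma match2 (p q r t : ℤ) (h : (p:ℝ) - q * s.ξ = (r:ℝ) - t * s.ξ) : p = r ∧ q = t := by
  have hqt : q = t := by
    by_contra hne
    have hne' : ((q:ℝ)) - t ≠ 0 := by
      intro h0
      exact hne (by exact_mod_cast sub_eq_zero.mp h0)
    have hxi : s.ξ = ((p - r : ℤ) : ℝ) / ((q - t : ℤ) : ℝ) := by
      push_cast
      rw [eq_div_iff (by push_cast at hne' ⊢; exact hne')]
      nlinarith [h]
    apply s.irr
    rw [hxi]
    exact ⟨((p - r : ℤ) : ℚ) / ((q - t : ℤ) : ℚ), by push_cast; ring⟩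
  refine ⟨?_, hqt⟩
  subst hqt
  have : ((p:ℝ)) = r := by nlinarith [h]
  exact_mod_cast this

lemma PQ_per (n : ℕ) :
    s.P (n + s.T + 1) = s.P (n+1) * s.P (s.T+1) + (s.d:ℤ) * s.Q (n+1) * s.Q (s.T+1) ∧
    s.Q (n + s.T + 1) = s.P (n+1) * s.Q (s.T+1) + s.Q (n+1) * s.P (s.T+1) := by
  have h := s.zb_per n
  unfold zb at h
  have hxi := s.xi_sq
  have h2 : ((s.P (n + s.T + 1) : ℝ)) - (s.Q (n + s.T + 1) : ℝ) * s.ξ =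
      ((s.P (n+1) * s.P (s.T+1) + (s.d:ℤ) * s.Q (n+1) * s.Q (s.T+1) : ℤ) : ℝ) -
      ((s.P (n+1) * s.Q (s.T+1) + s.Q (n+1) * s.P (s.T+1) : ℤ) : ℝ) * s.ξ := by
    rw [h]
    push_cast
    linear_combination ((s.Q (n+1):ℝ) * (s.Q (s.T+1):ℝ)) * hxi
  have := s.match2 _ _ _ _ h2
  exact this

lemma zp_per (n : ℕ) : s.zp (n + s.T) = s.zp n * s.zp s.T := by
  have h := s.PQ_per n
  unfold zp
  rw [h.1, h.2]
  push_cast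
  linear_combination (-((s.Q (n+1):ℝ) * (s.Q (s.T+1):ℝ))) * s.xi_sq

lemma zp_per_mul (k n : ℕ) : s.zp (n + k * s.T) = s.zp n * (s.zp s.T)^k := by
  induction k with
  | zero => simp
  | succ k ih =>
      rw [show n + (k+1) * s.T = n + k * s.T + s.T by ring, s.zp_per, ih, pow_succ]
      ring
end St

/-- Continuants. -/
def K (c : ℕ → ℤ) : ℕ → ℤ
  | 0 => 1
  | 1 => c 0
  | (n+2) => c (n+1) * K c (n+1) + K c n

lemma K_zero (c : ℕ → ℤ) : K c 0 = 1 := rfl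
lemma K_one (c : ℕ → ℤ) : K c 1 = c 0 := rfl
lemma K_rec (c : ℕ → ℤ) (n : ℕ) : K c (n+2) = c (n+1) * K c (n+1) + K c n := rfl

lemma K_congr (c c' : ℕ → ℤ) (h : ∀ i, c i = c' i) : ∀ n, K c n = K c' n := by
  intro n
  induction n using Nat.strong_induction_on with
  | _ n ih =>
      match n with
      | 0 => rfl
      | 1 => rw [K_one, K_one, h 0]
      | (m+2) => rw [K_rec, K_rec, h (m+1), ih (m+1) (by omega), ih m (by omega)]

lemma K_pos (c : ℕ → ℤ) (hc : ∀ i, 1 ≤ c i) : ∀ n, 1 ≤ K c n := by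
  intro n
  induction n using Nat.strong_induction_on with
  | _ n ih =>
      match n with
      | 0 => exact le_refl 1
      | 1 => exact hc 0
      | (m+2) =>
          rw [K_rec]
          nlinarith [hc (m+1), ih (m+1) (by omega), ih m (by omega)]

lemma K_left (c : ℕ → ℤ) : ∀ n, K c (n+2) =
    c 0 * K (fun i => c (i+1)) (n+1) + K (fun i => c (i+2)) n := by
  intro n
  induction n using Nat.strong_induction_on with
  | _ n ih =>
      match n with
      | 0 =>
          have h1 : K c (0+2) = c 1 * c 0 + 1 := rfl
          have h2 : K (fun i => c (i+1)) (0+1) = c 1 := rfl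
          have h3 : K (fun i => c (i+2)) 0 = 1 := rfl
          rw [h1, h2, h3]; ring
      | 1 =>
          have h1 : K c (1+2) = c 2 * (c 1 * c 0 + 1) + c 0 := rfl
          have h2 : K (fun i => c (i+1)) (1+1) = c 2 * c 1 + 1 := rfl
          have h3 : K (fun i => c (i+2)) 1 = c 2 := rfl
          rw [h1, h2, h3]; ring
      | (m+2) =>
          have e1 := ih (m+1) (by omega)
          have e2 := ih m (by omega)
          have r1 : K c (m+2+2) = c (m+2+1) * K c (m+1+2) + K c (m+2) := rfl
          have r2 : K (fun i => c (i+1)) (m+2+1) =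
              c (m+2+1) * K (fun i => c (i+1)) (m+1+1) + K (fun i => c (i+1)) (m+1) := rfl
          have r3 : K (fun i => c (i+2)) (m+2) =
              c (m+2+1) * K (fun i => c (i+2)) (m+1) + K (fun i => c (i+2)) m := rfl
          rw [r1, r2, r3, e1, e2]
          ring

lemma pq_cq_shift (x : ℝ) (k n : ℕ) : pq (cq x k) n = pq x (k + n) := by
  unfold pq
  rw [cq_shift]

lemma pq_zero (x : ℝ) : pq x 0 = ⌊x⌋ := rfl

lemma conv_bridge : ∀ (n : ℕ) (x : ℝ), Irrational x →
    Real.convergent x n = ((K (pq x) (n+1) : ℤ) : ℚ) / ((K (fun i => pq x (i+1)) n : ℤ) : ℚ) := by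
  intro n
  induction n with
  | zero =>
      intro x hx
      rw [Real.convergent_zero, K_one, K_zero, pq_zero]
      norm_num
  | succ n ih =>
      intro x hx
      rw [Real.convergent_succ]
      have hfr : (Int.fract x)⁻¹ = cq x 1 := by rw [cq_succ, cq_zero]
      have hirr1 : Irrational (cq x 1) := irr_cq hx 1
      have IH := ih (cq x 1) hirr1
      have hc1 : ∀ i, pq (cq x 1) i = pq x (i+1) := fun i => by
        rw [pq_cq_shift, Nat.add_comm]
      have e1 : K (pq (cq x 1)) (n+1) = K (fun i => pq x (i+1)) (n+1) :=
        K_congr _ _ hc1 (n+1)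
      have e2 : K (fun i => pq (cq x 1) (i+1)) n = K (fun i => pq x (i+2)) n :=
        K_congr _ _ (fun i => hc1 (i+1)) n
      rw [hfr, IH, e1, e2]
      have hposA : (1:ℤ) ≤ K (fun i => pq x (i+1)) (n+1) :=
        K_pos _ (fun i => pq_pos hx i) (n+1)
      have hposB : (1:ℤ) ≤ K (fun i => pq x (i+2)) n :=
        K_pos _ (fun i => pq_pos hx (i+1)) n
      have hA : ((K (fun i => pq x (i+1)) (n+1) : ℤ) : ℚ) ≠ 0 := by
        exact_mod_cast (by omega : (K (fun i => pq x (i+1)) (n+1) : ℤ) ≠ 0)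
      have hB : ((K (fun i => pq x (i+2)) n : ℤ) : ℚ) ≠ 0 := by
        exact_mod_cast (by omega : (K (fun i => pq x (i+2)) n : ℤ) ≠ 0)
      rw [K_left (pq x) n, pq_zero]
      push_cast
      field_simp

namespace St
variable (s : St)

lemma P_eq_K : ∀ n, s.P (n+1) = K s.aq n := by
  intro n
  induction n using Nat.strong_induction_on with
  | _ n ih =>
      match n with
      | 0 => rw [s.hP1, K_zero]
      | 1 =>
          have h := s.hP 0; rw [s.hP1, s.hP0] at h; norm_num at h
          rw [show (1:ℕ)+1 = 2 from rfl, h, K_one]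
      | (m+2) =>
          rw [show m+2+1 = (m+1)+2 from rfl, s.hP (m+1), K_rec,
            ih (m+1) (by omega), ih m (by omega)]

lemma Q_eq_K : ∀ n, s.Q (n+2) = K (fun i => s.aq (i+1)) n := by
  intro n
  induction n using Nat.strong_induction_on with
  | _ n ih =>
      match n with
      | 0 =>
          have h := s.hQ 0; rw [s.hQ1, s.hQ0] at h; norm_num at h
          rw [show (0:ℕ)+2 = 2 from rfl, h, K_zero]
      | 1 =>
          have h2 : s.Q 2 = 1 := by
            have h := s.hQ 0; rw [s.hQ1, s.hQ0] at h; norm_num at h; exact h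
          rw [show (1:ℕ)+2 = 1+2 from rfl, s.hQ 1, h2, K_one, mul_one]
          have h3 : s.Q 1 = 0 := s.hQ1
          rw [h3, add_zero]
      | (m+2) =>
          rw [show m+2+2 = (m+2)+2 from rfl, s.hQ (m+2), K_rec,
            ih (m+1) (by omega), ih m (by omega)]

lemma conv_xi (n : ℕ) :
    Real.convergent s.ξ n = ((s.P (n+2) : ℤ) : ℚ) / ((s.Q (n+2) : ℤ) : ℚ) := by
  rw [conv_bridge n s.ξ s.irr]
  have e1 : K (pq s.ξ) (n+1) = K s.aq (n+1) :=
    K_congr _ _ (fun i => by rw [s.haq i]; rfl) (n+1)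
  have e2 : K (fun i => pq s.ξ (i+1)) n = K (fun i => s.aq (i+1)) n :=
    K_congr _ _ (fun i => by rw [s.haq (i+1)]; rfl) n
  rw [e1, e2, ← s.P_eq_K (n+1), ← s.Q_eq_K n]

lemma xi_inv_lt_one : s.ξ⁻¹ < 1 := by
  rw [inv_lt_one_iff₀]
  right
  linarith [s.xi_gt_two]

lemma xi_inv_pos : 0 < s.ξ⁻¹ := inv_pos.mpr s.xi_pos

lemma cq_inv_one : cq s.ξ⁻¹ 1 = s.ξ := by
  rw [cq_succ, cq_zero, Int.fract_eq_self.mpr ⟨s.xi_inv_pos.le, s.xi_inv_lt_one⟩, inv_inv]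

lemma pq_inv_zero : pq s.ξ⁻¹ 0 = 0 := by
  rw [pq_zero]
  exact Int.floor_eq_zero_iff.mpr ⟨s.xi_inv_pos.le, s.xi_inv_lt_one⟩

lemma irr_inv : Irrational s.ξ⁻¹ := s.irr.inv

lemma pq_inv_succ (i : ℕ) : pq s.ξ⁻¹ (i+1) = pq s.ξ i := by
  unfold pq
  rw [show i+1 = 1+i by omega, cq_shift, s.cq_inv_one]

lemma conv_xi_inv (n : ℕ) :
    Real.convergent s.ξ⁻¹ (n+1) = ((s.Q (n+2) : ℤ) : ℚ) / ((s.P (n+2) : ℤ) : ℚ) := by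
  rw [conv_bridge (n+1) s.ξ⁻¹ s.irr_inv]
  have e0 : K (pq s.ξ⁻¹) (n+2) = K (fun i => s.aq (i+1)) n := by
    rw [K_left]
    rw [s.pq_inv_zero, zero_mul, zero_add]
    exact K_congr _ _ (fun i => by rw [s.pq_inv_succ (i+1), s.haq]; rfl) n
  have e1 : K (fun i => pq s.ξ⁻¹ (i+1)) (n+1) = K s.aq (n+1) :=
    K_congr _ _ (fun i => by rw [s.pq_inv_succ i, s.haq]; rfl) (n+1)
  rw [e0, e1, ← s.P_eq_K (n+1), ← s.Q_eq_K n]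

end St
namespace St
variable (s : St)

lemma cross_eq (A B : ℤ) (hB : 1 ≤ B) (hcop : IsCoprime A B) (n : ℕ)
    (h : A * s.Q (n+2) = s.P (n+2) * B) : A = s.P (n+2) ∧ B = s.Q (n+2) := by
  have hQp := s.Qpos n
  have hdvd1 : B ∣ s.Q (n+2) := by
    have h1 : B ∣ A * s.Q (n+2) := ⟨s.P (n+2), by linarith⟩
    exact (hcop.symm).dvd_of_dvd_mul_left h1
  have hdvd2 : s.Q (n+2) ∣ B := by
    have h1 : s.Q (n+2) ∣ s.P (n+2) * B := ⟨A, by linarith⟩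
    exact ((s.coprimePQ (n+1)).symm).dvd_of_dvd_mul_left h1
  have hBQ : B = s.Q (n+2) := Int.dvd_antisymm (by linarith) (by linarith) hdvd1 hdvd2
  refine ⟨?_, hBQ⟩
  rw [hBQ] at h
  exact mul_right_cancel₀ (by linarith : s.Q (n+2) ≠ 0) h

set_option maxHeartbeats 2000000 in
lemma legendre_bridge (A B c : ℤ) (hA : 1 ≤ A) (hB : 1 ≤ B) (hcop : IsCoprime A B)
    (hc1 : 1 ≤ c) (hcx : (c:ℝ) < s.ξ)
    (h : A^2 - (s.d:ℤ)*B^2 = c ∨ A^2 - (s.d:ℤ)*B^2 = -c) :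
    ∃ m, 1 ≤ m ∧ A = s.P (m+1) ∧ B = s.Q (m+1) := by
  have hAr : (1:ℝ) ≤ (A:ℝ) := by exact_mod_cast hA
  have hBr : (1:ℝ) ≤ (B:ℝ) := by exact_mod_cast hB
  have hcr : (1:ℝ) ≤ (c:ℝ) := by exact_mod_cast hc1
  have hxr := s.xi_gt_two
  have hxsq := s.xi_sq
  cases h with
  | inl h1 =>
      have h1r : (A:ℝ)^2 - (s.d:ℝ)*(B:ℝ)^2 = c := by exact_mod_cast h1
      rw [← hxsq] at h1r
      have hBA : (B:ℝ) * s.ξ < A := by nlinarith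
      have hBt : ((B.toNat : ℤ)) = B := Int.toNat_of_nonneg (by linarith)
      have hass : Real.ContfracLegendre.Ass s.ξ A (B.toNat) := by
        refine ⟨by rw [hBt]; exact hcop, ?_, ?_⟩
        · intro hB1
          rw [hBt] at hB1
          have hB1' : (B:ℝ) = 1 := by exact_mod_cast hB1
          rw [hB1'] at hBA h1r
          -- A² - ξ² = c,  ξ < A
          nlinarith
        · rw [hBt]
          have hBpos : (0:ℝ) < (B:ℝ) := by linarith
          have hABpos : (0:ℝ) < (B:ℝ) * ((A:ℝ) + (B:ℝ) * s.ξ) := by nlinarith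
          have hkey : ((A:ℝ)/(B:ℝ) - s.ξ) * ((B:ℝ) * ((A:ℝ) + (B:ℝ) * s.ξ)) = c := by
            field_simp
            ring_nf
            nlinarith [h1r]
          have hlt : s.ξ < (A:ℝ)/(B:ℝ) := by
            rw [lt_div_iff₀ hBpos]
            nlinarith
          have habs : |s.ξ - (A:ℝ)/(B:ℝ)| = (A:ℝ)/(B:ℝ) - s.ξ := by
            rw [abs_sub_comm]
            exact abs_of_pos (by linarith)
          rw [habs]
          have heq : (A:ℝ)/(B:ℝ) - s.ξ = (c:ℝ) / ((B:ℝ) * ((A:ℝ) + (B:ℝ) * s.ξ)) :=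
            eq_div_of_mul_eq hABpos.ne' hkey
          rw [heq]
          have hBB : (0:ℝ) < (B:ℝ)*(2*(B:ℝ)-1) := by nlinarith
          rw [inv_eq_one_div, div_lt_div_iff₀ hABpos hBB]
          nlinarith [mul_nonneg (by linarith : (0:ℝ) ≤ s.ξ - c) (by nlinarith : (0:ℝ) ≤ (B:ℝ)*(2*(B:ℝ)-1)),
            mul_nonneg (mul_nonneg hBpos.le (by linarith : (0:ℝ) ≤ (B:ℝ) - 1)) (by linarith : (0:ℝ) ≤ s.ξ),
            mul_pos hBpos s.xi_pos]
      obtain ⟨n, hn⟩ := Real.exists_rat_eq_convergent' hass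
      have hQp := s.Qpos n
      have hn2 : ((A : ℚ)) / ((B : ℚ)) = ((s.P (n+2) : ℚ)) / ((s.Q (n+2) : ℚ)) := by
        rw [← s.conv_xi n, ← hn]
        congr 1
        exact_mod_cast hBt.symm
      have hcross : A * s.Q (n+2) = s.P (n+2) * B := by
        have hBq : ((B : ℤ) : ℚ) ≠ 0 := by exact_mod_cast (by linarith : B ≠ 0)
        have hQq : ((s.Q (n+2) : ℤ) : ℚ) ≠ 0 := by exact_mod_cast (by linarith : s.Q (n+2) ≠ 0)
        rw [div_eq_div_iff hBq hQq] at hn2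
        exact_mod_cast hn2
      obtain ⟨e1, e2⟩ := s.cross_eq A B hB hcop n hcross
      exact ⟨n+1, by omega, e1, e2⟩
  | inr h1 =>
      have h1r : (A:ℝ)^2 - (s.d:ℝ)*(B:ℝ)^2 = -c := by exact_mod_cast h1
      rw [← hxsq] at h1r
      have hBA : (A:ℝ) < (B:ℝ) * s.ξ := by
        have hsumpos : (0:ℝ) < (B:ℝ) * s.ξ + (A:ℝ) := by positivity
        nlinarith [hcr, hsumpos]
      have hAt : ((A.toNat : ℤ)) = A := Int.toNat_of_nonneg (by linarith)
      have hass : Real.ContfracLegendre.Ass s.ξ⁻¹ B (A.toNat) := by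
        refine ⟨by rw [hAt]; exact hcop.symm, ?_, ?_⟩
        · intro hA1
          exfalso
          rw [hAt] at hA1
          have hA1' : (A:ℝ) = 1 := by exact_mod_cast hA1
          have hd6 : (6:ℝ) ≤ (s.d:ℝ) := by exact_mod_cast s.d_ge
          -- c = ξ²B² - 1 ≥ d - 1 > ξ > c
          rw [hA1'] at h1r
          nlinarith
        · rw [hAt]
          have hApos : (0:ℝ) < (A:ℝ) := by linarith
          have hBpos : (0:ℝ) < (B:ℝ) := by linarith
          have hxipos := s.xi_inv_pos
          have hsum0 : (0:ℝ) < (B:ℝ) * s.ξ + (A:ℝ) := by positivity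
          have hsum : (0:ℝ) < (A:ℝ) * s.ξ * ((B:ℝ) * s.ξ + (A:ℝ)) :=
            mul_pos (mul_pos hApos s.xi_pos) hsum0
          have hAxne : ((A:ℝ) * s.ξ) ≠ 0 := (mul_pos hApos s.xi_pos).ne'
          have e : (B:ℝ)/(A:ℝ) - s.ξ⁻¹ = ((B:ℝ)*s.ξ - (A:ℝ)) / ((A:ℝ)*s.ξ) := by
            rw [inv_eq_one_div, div_sub_div _ _ hApos.ne' s.xi_pos.ne']
            ring_nf
          have e3 : (((B:ℝ)*s.ξ - (A:ℝ)) / ((A:ℝ)*s.ξ)) * ((A:ℝ) * s.ξ * ((B:ℝ) * s.ξ + (A:ℝ))) =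
              ((B:ℝ)*s.ξ - (A:ℝ)) * ((B:ℝ)*s.ξ + (A:ℝ)) := by
            rw [div_mul_eq_mul_div, mul_comm ((A:ℝ)*s.ξ) (((B:ℝ)*s.ξ + (A:ℝ))), ← mul_assoc,
              mul_div_assoc, div_self hAxne, mul_one]
          have hkey : ((B:ℝ)/(A:ℝ) - s.ξ⁻¹) * ((A:ℝ) * s.ξ * ((B:ℝ) * s.ξ + (A:ℝ))) = c := by
            rw [e, e3]
            linear_combination (-1:ℝ) * h1r
          have hlt : s.ξ⁻¹ < (B:ℝ)/(A:ℝ) := by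
            rw [inv_eq_one_div, div_lt_div_iff₀ s.xi_pos hApos]
            nlinarith
          have habs : |s.ξ⁻¹ - (B:ℝ)/(A:ℝ)| = (B:ℝ)/(A:ℝ) - s.ξ⁻¹ := by
            rw [abs_sub_comm]
            exact abs_of_pos (by linarith)
          rw [habs]
          have heq : (B:ℝ)/(A:ℝ) - s.ξ⁻¹ = (c:ℝ) / ((A:ℝ) * s.ξ * ((B:ℝ) * s.ξ + (A:ℝ))) :=
            eq_div_of_mul_eq hsum.ne' hkey
          rw [heq]
          have hAA : (0:ℝ) < (A:ℝ)*(2*(A:ℝ)-1) := by nlinarith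
          rw [inv_eq_one_div, div_lt_div_iff₀ hsum hAA]
          have t1 : (0:ℝ) ≤ (s.ξ - c) * ((2*(A:ℝ)-1)*(A:ℝ)) :=
            mul_nonneg (by linarith) (by nlinarith)
          have t2 : (0:ℝ) < (A:ℝ) * s.ξ * ((B:ℝ)*s.ξ - (A:ℝ) + 1) :=
            mul_pos (mul_pos hApos s.xi_pos) (by linarith)
          nlinarith [t1, t2]
      obtain ⟨n, hn⟩ := Real.exists_rat_eq_convergent' hass
      match n with
      | 0 =>
          exfalso
          have hz : ⌊s.ξ⁻¹⌋ = 0 := by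
            have := s.pq_inv_zero
            rwa [pq_zero] at this
          rw [Real.convergent_zero, hz] at hn
          have hAq : ((A.toNat : ℕ) : ℚ) ≠ 0 := by
            have h9 : (0:ℤ) < A.toNat := by omega
            exact_mod_cast (by omega : (A.toNat : ℤ) ≠ 0)
          rw [div_eq_iff hAq] at hn
          simp at hn
          have : B = 0 := by exact_mod_cast hn
          omega
      | (m+1) =>
          have hPp := s.Ppos (m+1)
          have hn2 : ((B : ℚ)) / ((A : ℚ)) = ((s.Q (m+2) : ℚ)) / ((s.P (m+2) : ℚ)) := by
            rw [← s.conv_xi_inv m, ← hn]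
            congr 1
            exact_mod_cast hAt.symm
          have hcross : B * s.P (m+2) = s.Q (m+2) * A := by
            have hAq : ((A : ℤ) : ℚ) ≠ 0 := by exact_mod_cast (by linarith : A ≠ 0)
            have hPq : ((s.P (m+2) : ℤ) : ℚ) ≠ 0 := by exact_mod_cast (by linarith : s.P (m+2) ≠ 0)
            rw [div_eq_div_iff hAq hPq] at hn2
            exact_mod_cast hn2
          -- A = P (m+2), B = Q (m+2)
          have hdvd1 : A ∣ s.P (m+2) := by
            have h2 : A ∣ B * s.P (m+2) := ⟨s.Q (m+2), by linarith⟩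
            exact hcop.dvd_of_dvd_mul_left h2
          have hdvd2 : s.P (m+2) ∣ A := by
            have h2 : s.P (m+2) ∣ s.Q (m+2) * A := ⟨B, by linarith⟩
            exact (s.coprimePQ (m+1)).dvd_of_dvd_mul_left h2
          have hAP : A = s.P (m+2) := Int.dvd_antisymm (by linarith) (by linarith) hdvd1 hdvd2
          have hBQ : B = s.Q (m+2) := by
            rw [hAP] at hcross
            exact mul_right_cancel₀ (by linarith : s.P (m+2) ≠ 0) hcross
          exact ⟨m+1, by omega, hAP, hBQ⟩

end St
namespace St
variable (s : St)

lemma b_dvd_P (n : ℕ) (hn : 1 ≤ n) (hvb : s.v n = (s.b:ℤ)) (hub : (s.b:ℤ) ∣ s.u n) :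
    (s.b:ℤ) ∣ s.P (n+1) := by
  rw [s.rI n hn, hvb]
  exact dvd_add (Dvd.dvd.mul_right hub _) (Dvd.dvd.mul_right dvd_rfl _)

lemma b_dvd_d : (s.b:ℤ) ∣ (s.d:ℤ) := by
  rw [s.hdab]; push_cast; exact dvd_mul_left _ _

lemma zp_pos (n : ℕ) : 0 < s.zp n := by
  unfold zp
  have h1 := s.Ppos n
  have h2 := s.Qnonneg (n+1)
  have c1 : (1:ℝ) ≤ (s.P (n+1) : ℝ) := by exact_mod_cast h1
  have c2 : (0:ℝ) ≤ (s.Q (n+1) : ℝ) := by exact_mod_cast h2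
  nlinarith [s.xi_pos]

lemma zp_mono (m n : ℕ) (hm : 1 ≤ m) (hmn : m < n) : s.zp m < s.zp n := by
  unfold zp
  have h1 := s.Pmono m n hm hmn
  have h2 := s.Qmono m n hm hmn.le
  have c1 : (s.P (m+1) : ℝ) < (s.P (n+1) : ℝ) := by exact_mod_cast h1
  have c2 : (s.Q (m+1) : ℝ) ≤ (s.Q (n+1) : ℝ) := by exact_mod_cast h2
  nlinarith [s.xi_pos]

lemma zp_zb (n : ℕ) : s.zp n * s.zb n = (((-1:ℤ))^n * s.v n : ℤ) := by
  have hk := s.key n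
  unfold zp zb
  have h2 : ((s.P (n+1)^2 - (s.d:ℤ) * s.Q (n+1)^2 : ℤ) : ℝ) = ((((-1:ℤ))^n * s.v n : ℤ) : ℝ) := by
    exact_mod_cast congrArg (fun z : ℤ => (z : ℝ)) hk
  push_cast at h2 ⊢
  nlinarith [h2, s.xi_sq]

lemma bpos : (0:ℤ) < (s.b:ℤ) := by have := s.hb2; positivity

lemma zp0 : s.zp 0 = 1 := by
  unfold zp; rw [s.hP1, s.hQ1]; push_cast; ring

set_option maxHeartbeats 2000000 in
/-- Uniqueness modulo `T` of indices with `v n = b` and `b ∣ u n`. -/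
lemma S_congr (n₁ n₂ : ℕ) (h1 : 1 ≤ n₁) (h12 : n₁ ≤ n₂)
    (hv1 : s.v n₁ = (s.b:ℤ)) (hu1 : (s.b:ℤ) ∣ s.u n₁)
    (hv2 : s.v n₂ = (s.b:ℤ)) (hu2 : (s.b:ℤ) ∣ s.u n₂) :
    ∃ k, n₂ = n₁ + k * s.T := by
  rcases Nat.eq_or_lt_of_le h12 with rfl | hlt
  · exact ⟨0, by omega⟩
  have h2 : 1 ≤ n₂ := by omega
  have hbP1 := s.b_dvd_P n₁ h1 hv1 hu1
  have hbP2 := s.b_dvd_P n₂ h2 hv2 hu2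
  have hbX : (s.b:ℤ) ∣ (s.P (n₂+1) * s.P (n₁+1) - (s.d:ℤ) * s.Q (n₂+1) * s.Q (n₁+1)) :=
    dvd_sub (Dvd.dvd.mul_left hbP1 _) (Dvd.dvd.mul_right (Dvd.dvd.mul_right s.b_dvd_d _) _)
  have hbY : (s.b:ℤ) ∣ (s.Q (n₂+1) * s.P (n₁+1) - s.P (n₂+1) * s.Q (n₁+1)) :=
    dvd_sub (Dvd.dvd.mul_left hbP1 _) (Dvd.dvd.mul_right hbP2 _)
  obtain ⟨X', hX'⟩ := hbX
  obtain ⟨Y', hY'⟩ := hbY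
  have hk1 := s.key n₁
  have hk2 := s.key n₂
  rw [hv1] at hk1
  rw [hv2] at hk2
  have hbne : (s.b:ℤ) ≠ 0 := s.bpos.ne'
  -- parity sign
  have hee : ((-1:ℤ))^n₁ * ((-1:ℤ))^n₁ = 1 := by
    rw [← pow_add]; exact Even.neg_one_pow ⟨n₁, rfl⟩
  have hη : ((-1:ℤ))^(n₁+n₂) = 1 ∨ ((-1:ℤ))^(n₁+n₂) = -1 := by
    rcases Nat.even_or_odd (n₁+n₂) with h | h
    · left; exact Even.neg_one_pow h
    · right; exact Odd.neg_one_pow h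
  -- norm of the quotient
  have hnorm : ((s.b:ℤ) * X')^2 - (s.d:ℤ) * ((s.b:ℤ) * Y')^2 = ((-1:ℤ))^(n₁+n₂) * (s.b:ℤ)^2 := by
    rw [← hX', ← hY', pow_add]
    linear_combination (s.P (n₁+1)^2 - (s.d:ℤ)*s.Q (n₁+1)^2) * hk2 +
      ((-1:ℤ))^n₂ * (s.b:ℤ) * hk1
  have hRS : (((-1:ℤ))^n₁ * X')^2 - (s.d:ℤ) * (((-1:ℤ))^n₁ * Y')^2 = ((-1:ℤ))^(n₁+n₂) := by
    have h3 : (s.b:ℤ)^2 * ((((-1:ℤ))^n₁ * X')^2 - (s.d:ℤ) * (((-1:ℤ))^n₁ * Y')^2)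
        = (s.b:ℤ)^2 * ((-1:ℤ))^(n₁+n₂) := by
      have h4 : (((-1:ℤ))^n₁ * X')^2 - (s.d:ℤ) * (((-1:ℤ))^n₁ * Y')^2
          = (((-1:ℤ))^n₁ * ((-1:ℤ))^n₁) * (X'^2 - (s.d:ℤ)*Y'^2) := by ring
      rw [h4, hee, one_mul]
      linear_combination hnorm
    exact mul_left_cancel₀ (pow_ne_zero 2 hbne) h3
  -- real value
  have hzz : s.zp n₂ * s.zb n₁ =
      ((s.P (n₂+1) * s.P (n₁+1) - (s.d:ℤ) * s.Q (n₂+1) * s.Q (n₁+1) : ℤ) : ℝ) +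
      ((s.Q (n₂+1) * s.P (n₁+1) - s.P (n₂+1) * s.Q (n₁+1) : ℤ) : ℝ) * s.ξ := by
    unfold zp zb
    push_cast
    linear_combination (-(s.Q (n₂+1):ℝ) * (s.Q (n₁+1):ℝ)) * s.xi_sq
  have hzb1 : s.zp n₁ * s.zb n₁ = ((((-1:ℤ))^n₁ : ℤ):ℝ) * (s.b:ℝ) := by
    rw [s.zp_zb n₁, hv1]
    push_cast
    ring
  have hesign : ((-1:ℤ))^n₁ = 1 ∨ ((-1:ℤ))^n₁ = -1 := by
    rcases Nat.even_or_odd n₁ with h | h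
    · left; exact Even.neg_one_pow h
    · right; exact Odd.neg_one_pow h
  have hebne : ((((-1:ℤ))^n₁ : ℤ):ℝ) * (s.b:ℝ) ≠ 0 := by
    apply mul_ne_zero
    · rcases hesign with h | h <;> rw [h] <;> norm_num
    · exact_mod_cast hbne
  have hval : s.zp n₁ * (((((-1:ℤ))^n₁ * X' : ℤ):ℝ) + ((((-1:ℤ))^n₁ * Y' : ℤ):ℝ) * s.ξ) = s.zp n₂ := by
    apply mul_right_cancel₀ hebne
    have hXr : ((s.P (n₂+1) * s.P (n₁+1) - (s.d:ℤ) * s.Q (n₂+1) * s.Q (n₁+1) : ℤ) : ℝ)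
        = (s.b:ℝ) * (X':ℝ) := by exact_mod_cast congrArg (fun z:ℤ => (z:ℝ)) hX'
    have hYr : ((s.Q (n₂+1) * s.P (n₁+1) - s.P (n₂+1) * s.Q (n₁+1) : ℤ) : ℝ)
        = (s.b:ℝ) * (Y':ℝ) := by exact_mod_cast congrArg (fun z:ℤ => (z:ℝ)) hY'
    have heer : ((((-1:ℤ))^n₁ : ℤ):ℝ) * ((((-1:ℤ))^n₁ : ℤ):ℝ) = 1 := by exact_mod_cast hee
    calc (s.zp n₁ * (((((-1:ℤ))^n₁ * X' : ℤ):ℝ) + ((((-1:ℤ))^n₁ * Y' : ℤ):ℝ) * s.ξ)) * (((((-1:ℤ))^n₁ : ℤ):ℝ) * (s.b:ℝ))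
        = s.zp n₁ * (((((-1:ℤ))^n₁ : ℤ):ℝ) * ((((-1:ℤ))^n₁ : ℤ):ℝ)) * (((s.b:ℝ) * (X':ℝ)) + ((s.b:ℝ) * (Y':ℝ)) * s.ξ) := by
          push_cast
          ring
      _ = s.zp n₁ * (((s.b:ℝ) * (X':ℝ)) + ((s.b:ℝ) * (Y':ℝ)) * s.ξ) := by rw [heer, mul_one]
      _ = s.zp n₁ * (s.zp n₂ * s.zb n₁) := by rw [hzz, hXr, hYr]
      _ = s.zp n₂ * (s.zp n₁ * s.zb n₁) := by ring
      _ = s.zp n₂ * (((((-1:ℤ))^n₁ : ℤ):ℝ) * (s.b:ℝ)) := by rw [hzb1]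
  -- abbreviations for the unit
  have hzp1 := s.zp_pos n₁
  have hzp2 := s.zp_pos n₂
  have hmono := s.zp_mono n₁ n₂ h1 hlt
  have heps1 : 1 < ((((-1:ℤ))^n₁ * X' : ℤ):ℝ) + ((((-1:ℤ))^n₁ * Y' : ℤ):ℝ) * s.ξ := by
    by_contra hc
    push_neg at hc
    nlinarith [hval]
  have hepspos : (0:ℝ) < ((((-1:ℤ))^n₁ * X' : ℤ):ℝ) + ((((-1:ℤ))^n₁ * Y' : ℤ):ℝ) * s.ξ := by linarith
  have hconj : (((((-1:ℤ))^n₁ * X' : ℤ):ℝ) + ((((-1:ℤ))^n₁ * Y' : ℤ):ℝ) * s.ξ) *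
      (((((-1:ℤ))^n₁ * X' : ℤ):ℝ) - ((((-1:ℤ))^n₁ * Y' : ℤ):ℝ) * s.ξ) = ((((-1:ℤ))^(n₁+n₂) : ℤ):ℝ) := by
    have h5 : (((((-1:ℤ))^n₁ * X')^2 - (s.d:ℤ) * (((-1:ℤ))^n₁ * Y')^2 : ℤ) : ℝ)
        = ((((-1:ℤ))^(n₁+n₂) : ℤ):ℝ) := by exact_mod_cast congrArg (fun z:ℤ => (z:ℝ)) hRS
    push_cast at h5 ⊢
    nlinarith [h5, s.xi_sq]
  have hconjabs : |((((-1:ℤ))^n₁ * X' : ℤ):ℝ) - ((((-1:ℤ))^n₁ * Y' : ℤ):ℝ) * s.ξ| < 1 := by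
    have hηr : |((((-1:ℤ))^(n₁+n₂) : ℤ):ℝ)| = 1 := by
      rcases hη with h | h <;> rw [h] <;> norm_num
    have h5 : |((((-1:ℤ))^n₁ * X' : ℤ):ℝ) + ((((-1:ℤ))^n₁ * Y' : ℤ):ℝ) * s.ξ| *
        |((((-1:ℤ))^n₁ * X' : ℤ):ℝ) - ((((-1:ℤ))^n₁ * Y' : ℤ):ℝ) * s.ξ| = 1 := by
      rw [← abs_mul, hconj, hηr]
    rw [abs_of_pos hepspos] at h5
    nlinarith [abs_nonneg (((((-1:ℤ))^n₁ * X' : ℤ):ℝ) - ((((-1:ℤ))^n₁ * Y' : ℤ):ℝ) * s.ξ)]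
  have hSpos : 1 ≤ ((-1:ℤ))^n₁ * Y' := by
    have h7 : (0:ℝ) < ((((-1:ℤ))^n₁ * Y' : ℤ):ℝ) * s.ξ := by
      rcases abs_lt.mp hconjabs with ⟨ha, hb⟩
      linarith
    have h8 : (0:ℝ) < ((((-1:ℤ))^n₁ * Y' : ℤ):ℝ) := by
      nlinarith [s.xi_pos]
    exact_mod_cast (by exact_mod_cast h8 : (0:ℤ) < ((-1:ℤ))^n₁ * Y')
  have hRpos : 1 ≤ ((-1:ℤ))^n₁ * X' := by
    have h7 : (0:ℝ) < ((((-1:ℤ))^n₁ * X' : ℤ):ℝ) := by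
      rcases abs_lt.mp hconjabs with ⟨ha, hb⟩
      linarith
    exact_mod_cast (by exact_mod_cast h7 : (0:ℤ) < ((-1:ℤ))^n₁ * X')
  have hcopRS : IsCoprime (((-1:ℤ))^n₁ * X') (((-1:ℤ))^n₁ * Y') := by
    rcases hη with h | h
    · refine ⟨((-1:ℤ))^n₁ * X', -(s.d:ℤ)*(((-1:ℤ))^n₁ * Y'), ?_⟩
      rw [h] at hRS
      linear_combination hRS
    · refine ⟨-(((-1:ℤ))^n₁ * X'), (s.d:ℤ)*(((-1:ℤ))^n₁ * Y'), ?_⟩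
      rw [h] at hRS
      linear_combination -hRS
  have hxc : ((1:ℤ):ℝ) < s.ξ := by
    have := s.xi_gt_two; push_cast; linarith
  have hor : (((-1:ℤ))^n₁ * X')^2 - (s.d:ℤ)*(((-1:ℤ))^n₁ * Y')^2 = 1 ∨
      (((-1:ℤ))^n₁ * X')^2 - (s.d:ℤ)*(((-1:ℤ))^n₁ * Y')^2 = -1 := by
    rcases hη with h | h
    · left; rw [hRS, h]
    · right; rw [hRS, h]
  obtain ⟨m, hm1, hmP, hmQ⟩ := s.legendre_bridge _ _ 1 hRpos hSpos hcopRS le_rfl hxc hor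
  have hkm := s.key m
  rw [← hmP, ← hmQ, hRS] at hkm
  have hvm1 : s.v m = 1 := by
    have hvmp := s.hvpos m
    have hm2 : ((-1:ℤ))^m = 1 ∨ ((-1:ℤ))^m = -1 := by
      rcases Nat.even_or_odd m with h | h
      · left; exact Even.neg_one_pow h
      · right; exact Odd.neg_one_pow h
    rcases hη with h | h <;> rcases hm2 with h' | h' <;> rw [h, h'] at hkm <;> omega
  have hTm : s.T ∣ m := (s.v_one_iff m hm1).mp hvm1
  obtain ⟨k', hk'⟩ := hTm
  have hk'1 : 1 ≤ k' := by
    rcases Nat.eq_zero_or_pos k' with h | h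
    · exfalso; rw [h, Nat.mul_zero] at hk'; omega
    · exact h
  have hzpm : ((((-1:ℤ))^n₁ * X' : ℤ):ℝ) + ((((-1:ℤ))^n₁ * Y' : ℤ):ℝ) * s.ξ = s.zp m := by
    unfold zp; rw [← hmP, ← hmQ]
  have hzpkT : s.zp m = (s.zp s.T)^k' := by
    have h6 := s.zp_per_mul k' 0
    rw [Nat.zero_add, s.zp0, one_mul] at h6
    rw [hk', Nat.mul_comm]
    exact h6
  have hfin : s.zp n₂ = s.zp (n₁ + k' * s.T) := by
    rw [s.zp_per_mul k' n₁, ← hval, hzpm, hzpkT]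
  have hfin2 : (s.P (n₂+1) : ℝ) - (-(s.Q (n₂+1)) : ℤ) * s.ξ =
      (s.P (n₁ + k'*s.T + 1) : ℝ) - (-(s.Q (n₁ + k'*s.T + 1)) : ℤ) * s.ξ := by
    unfold zp at hfin
    push_cast at hfin ⊢
    linarith [hfin]
  have hmatch := s.match2 _ _ _ _ hfin2
  have hPeq : s.P (n₂+1) = s.P (n₁ + k'*s.T + 1) := hmatch.1
  have hidx : n₂ = n₁ + k' * s.T := by
    have hge : 1 ≤ n₁ + k' * s.T := by omega
    rcases lt_trichotomy n₂ (n₁ + k' * s.T) with h | h | h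
    · have := s.Pmono n₂ (n₁ + k'*s.T) h2 h
      omega
    · exact h
    · have := s.Pmono (n₁ + k'*s.T) n₂ hge h
      omega
  exact ⟨k', hidx⟩

lemma S_structure (n : ℕ) (hn : 1 ≤ n) (hvb : s.v n = (s.b:ℤ)) (hub : (s.b:ℤ) ∣ s.u n) :
    2 * (s.T / 2) = s.T ∧ s.v (s.T/2) = (s.b:ℤ) ∧ (s.b:ℤ) ∣ s.u (s.T/2) ∧
      ∃ l, n = s.T/2 + l * s.T := by
  have hbne1 : (s.b:ℤ) ≠ 1 := by
    have := s.hb2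
    have : (2:ℤ) ≤ (s.b:ℤ) := by exact_mod_cast this
    omega
  have hrn : n % s.T + (n / s.T) * s.T = n := Nat.mod_add_div' n s.T
  have hvr : s.v (n % s.T) = (s.b:ℤ) := by
    have h5 := (s.uv_per_mul (n / s.T) (n % s.T)).2
    rw [hrn] at h5
    rw [← h5]; exact hvb
  have hur : (s.b:ℤ) ∣ s.u (n % s.T) := by
    have h5 := (s.uv_per_mul (n / s.T) (n % s.T)).1
    rw [hrn] at h5
    rw [← h5]; exact hub
  have hr1 : 1 ≤ n % s.T := by
    rcases Nat.eq_zero_or_pos (n % s.T) with h | h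
    · exfalso; rw [h, s.hv0] at hvr; exact hbne1 hvr.symm
    · exact h
  have hrT : n % s.T < s.T := Nat.mod_lt n (by have := s.hT; omega)
  have hrj : (s.T - n % s.T) + (n % s.T) = s.T := by omega
  have hsymm := s.symm (s.T - n % s.T) (n % s.T) hrj
  -- hsymm : u (n%T + 1) = u (T - n%T) ∧ v (n%T) = v (T - n%T)
  have hvj : s.v (s.T - n % s.T) = (s.b:ℤ) := by rw [← hsymm.2]; exact hvr
  have huj1 : (s.b:ℤ) ∣ s.u (n % s.T + 1) := by
    rw [s.hu (n % s.T), hvr]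
    exact dvd_sub (Dvd.dvd.mul_left dvd_rfl _) hur
  have huj : (s.b:ℤ) ∣ s.u (s.T - n % s.T) := by
    rw [← hsymm.1]; exact huj1
  have hj1 : 1 ≤ s.T - n % s.T := by omega
  have hrjeq : n % s.T = s.T - n % s.T := by
    rcases Nat.le_total (n % s.T) (s.T - n % s.T) with h | h
    · obtain ⟨k, hk⟩ := s.S_congr (n % s.T) (s.T - n % s.T) hr1 h hvr hur hvj huj
      match k, hk with
      | 0, hk => omega
      | (k+1), hk =>
          exfalso
          have hx : (k+1) * s.T = k * s.T + s.T := by ring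
          omega
    · obtain ⟨k, hk⟩ := s.S_congr (s.T - n % s.T) (n % s.T) hj1 h hvj huj hvr hur
      match k, hk with
      | 0, hk => omega
      | (k+1), hk =>
          exfalso
          have hx : (k+1) * s.T = k * s.T + s.T := by ring
          omega
  have hTeven : 2 * (s.T / 2) = s.T := by omega
  have hrN : n % s.T = s.T / 2 := by omega
  refine ⟨hTeven, by rw [← hrN]; exact hvr, by rw [← hrN]; exact hur, ?_⟩
  exact ⟨n / s.T, by omega⟩

end St
namespace St
variable (s : St)

lemma hd' : (s.d:ℤ) = (s.a:ℤ) * (s.b:ℤ) := by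
  have := s.hdab; exact_mod_cast congrArg (fun z : ℕ => (z:ℤ)) this

lemma sol_of (n : ℕ) (hn : 1 ≤ n) (hodd : Odd n) (hvb : s.v n = (s.b:ℤ))
    (hub : (s.b:ℤ) ∣ s.u n) :
    ∃ y : ℤ, (s.b:ℤ) * y = s.P (n+1) ∧
      (s.a:ℤ) * (s.Q (n+1))^2 - (s.b:ℤ) * y^2 = 1 ∧ 1 ≤ y := by
  obtain ⟨y, hy⟩ := s.b_dvd_P n hn hvb hub
  have hk := s.key n
  rw [hvb, Odd.neg_one_pow hodd] at hk
  rw [hy] at hk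
  have hdd := s.hd'
  have h2 : (s.b:ℤ) * ((s.a:ℤ) * (s.Q (n+1))^2 - (s.b:ℤ) * y^2) = (s.b:ℤ) * 1 := by
    linear_combination (-1:ℤ) * hk - (s.Q (n+1))^2 * hdd
  have heq := mul_left_cancel₀ s.bpos.ne' h2
  have hy1 : 1 ≤ y := by
    by_contra hc
    push_neg at hc
    have h8 : (s.b:ℤ) * y ≤ 0 :=
      mul_nonpos_of_nonneg_of_nonpos (by positivity) (by omega)
    have h9 := s.Ppos n
    omega
  exact ⟨y, hy.symm, heq, hy1⟩

lemma b_lt_xi : ((s.b:ℤ):ℝ) < s.ξ := by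
  have h1 : s.b * s.b < s.d := by
    rw [s.hdab]
    have hb0 : 0 < s.b := by have := s.hb2; omega
    calc s.b * s.b < s.a * s.b := by exact Nat.mul_lt_mul_of_lt_of_le s.hba le_rfl hb0
    _ = s.a * s.b := rfl
  have h2 : ((s.b:ℝ))^2 < (s.d:ℝ) := by
    have : ((s.b * s.b : ℕ) : ℝ) < ((s.d : ℕ) : ℝ) := by exact_mod_cast h1
    push_cast at this
    nlinarith [this]
  push_cast
  exact (Real.lt_sqrt (by positivity)).mpr h2

lemma sol_to (x y : ℤ) (hx0 : 0 ≤ x) (hy0 : 0 ≤ y)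
    (heq : (s.a:ℤ) * x^2 - (s.b:ℤ) * y^2 = 1) :
    ∃ m, 1 ≤ m ∧ Odd m ∧ s.v m = (s.b:ℤ) ∧ (s.b:ℤ) ∣ s.u m ∧
      (s.b:ℤ) * y = s.P (m+1) ∧ x = s.Q (m+1) := by
  have hdd := s.hd'
  have hb2' : (2:ℤ) ≤ (s.b:ℤ) := by exact_mod_cast s.hb2
  have ha3' : (s.b:ℤ) < (s.a:ℤ) := by exact_mod_cast s.hba
  have hx1 : 1 ≤ x := by
    rcases Nat.eq_zero_or_pos x.toNat with h | h
    · exfalso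
      have hx00 : x = 0 := by omega
      rw [hx00] at heq
      nlinarith [sq_nonneg y, heq]
    · omega
  have hy1 : 1 ≤ y := by
    rcases Nat.eq_zero_or_pos y.toNat with h | h
    · exfalso
      have hy00 : y = 0 := by omega
      rw [hy00] at heq
      nlinarith [sq_nonneg x, heq, hx1]
    · omega
  have hA1 : 1 ≤ (s.b:ℤ) * y := by nlinarith
  have hcop : IsCoprime ((s.b:ℤ) * y) x := ⟨-y, (s.a:ℤ)*x, by linear_combination heq⟩
  have hAeq : ((s.b:ℤ)*y)^2 - (s.d:ℤ) * x^2 = -(s.b:ℤ) := by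
    linear_combination (-(s.b:ℤ)) * heq - x^2 * hdd
  obtain ⟨m, hm1, hmP, hmQ⟩ := s.legendre_bridge ((s.b:ℤ)*y) x (s.b:ℤ) hA1 hx1 hcop
    (by omega) s.b_lt_xi (Or.inr hAeq)
  have hk := s.key m
  rw [← hmP, ← hmQ] at hk
  have hvmp := s.hvpos m
  have hpar : Odd m ∧ s.v m = (s.b:ℤ) := by
    rcases Nat.even_or_odd m with h | h
    · exfalso
      rw [Even.neg_one_pow h, one_mul] at hk
      omega
    · refine ⟨h, ?_⟩
      rw [Odd.neg_one_pow h] at hk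
      omega
  have hbu : (s.b:ℤ) ∣ s.u m := by
    have hI := s.rI m hm1
    have h5 : (s.b:ℤ) ∣ s.u m * s.Q (m+1) := by
      have h6 : s.u m * s.Q (m+1) = s.P (m+1) - s.v m * s.Q m := by linarith [hI]
      rw [h6, hpar.2, ← hmP]
      exact dvd_sub ⟨y, rfl⟩ (Dvd.dvd.mul_right dvd_rfl _)
    have hcb : IsCoprime (s.b:ℤ) (s.Q (m+1)) := by
      rw [← hmQ]
      exact IsCoprime.of_mul_left_left hcop
    exact hcb.dvd_of_dvd_mul_right h5
  exact ⟨m, hm1, hpar.1, hpar.2, hbu, hmP, hmQ⟩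

end St


set_option maxHeartbeats 1000000 in
/-- Theorem 19, case `b < a`: solvability and solutions of
`a·x² - b·y² = 1`.  With `N = T/2`, solutions are exactly the pairs
`(q_{N-1+ℓT}, p_{N-1+ℓT}/b)`, where `P (n+2) = p_n`, `Q (n+2) = q_n`
(so `p_{N-1+ℓT} = P (N + ℓT + 1)`). -/
theorem stmt17 (a b : ℕ) (hb2 : 2 ≤ b) (hba : b < a) (hcop : Nat.Coprime a b)
    (d : ℕ) (hdab : d = a * b) (hd : ¬ IsSquare d)
    (aq aq' : ℕ → ℤ) (haq : ∀ n, aq n = pq (Real.sqrt d) n)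
    (haq'0 : aq' 0 = 2 * aq 0) (haq' : ∀ n, 1 ≤ n → aq' n = aq n)
    (u v : ℕ → ℤ) (hu0 : u 0 = aq 0) (hv0 : v 0 = 1)
    (hupos : ∀ n, 0 < u n) (hvpos : ∀ n, 0 < v n)
    (hu : ∀ n, u (n + 1) = aq' n * v n - u n)
    (hv : ∀ n, v n * v (n + 1) = (d : ℤ) - (u (n + 1)) ^ 2)
    (P Q : ℕ → ℤ)
    (hP0 : P 0 = 0) (hP1 : P 1 = 1) (hQ0 : Q 0 = 1) (hQ1 : Q 1 = 0)
    (hP : ∀ n, P (n + 2) = aq n * P (n + 1) + P n)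
    (hQ : ∀ n, Q (n + 2) = aq n * Q (n + 1) + Q n)
    (T : ℕ) (hT : 1 ≤ T)
    (hper : ∀ n, 1 ≤ n → pq (Real.sqrt d) (n + T) = pq (Real.sqrt d) n)
    (hmin : ∀ T', 1 ≤ T' →
      (∀ n, 1 ≤ n → pq (Real.sqrt d) (n + T') = pq (Real.sqrt d) n) → T ≤ T') :
    ((∃ x y : ℕ, (a : ℤ) * (x : ℤ) ^ 2 - (b : ℤ) * (y : ℤ) ^ 2 = 1) ↔
      (T % 4 = 2 ∧ v (T / 2) = (b : ℤ) ∧ v (T / 2) ∣ u (T / 2))) ∧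
    ((T % 4 = 2 ∧ v (T / 2) = (b : ℤ) ∧ v (T / 2) ∣ u (T / 2)) →
      ∀ x y : ℕ, ((a : ℤ) * (x : ℤ) ^ 2 - (b : ℤ) * (y : ℤ) ^ 2 = 1) ↔
        (∃ l : ℕ, (b : ℤ) ∣ P (T / 2 + l * T + 1) ∧
          (x : ℤ) = Q (T / 2 + l * T + 1) ∧
          (b : ℤ) * (y : ℤ) = P (T / 2 + l * T + 1))) := by
  set s : St := ⟨a, b, hb2, hba, hcop, d, hdab, hd, aq, aq', haq, haq'0, haq',
    u, v, hu0, hv0, hupos, hvpos, hu, hv, P, Q, hP0, hP1, hQ0, hQ1, hP, hQ,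
    T, hT, hper, hmin⟩ with hsdef
  -- basic re-statements
  have hsb : s.b = b := rfl
  have hsa : s.a = a := rfl
  have hsv : s.v = v := rfl
  have hsu : s.u = u := rfl
  have hsP : s.P = P := rfl
  have hsQ : s.Q = Q := rfl
  have hsT : s.T = T := rfl
  -- the forward extraction from a solution
  have main_to : ∀ x y : ℕ, (a : ℤ) * (x : ℤ) ^ 2 - (b : ℤ) * (y : ℤ) ^ 2 = 1 →
      ∃ m, 1 ≤ m ∧ Odd m ∧ v m = (b:ℤ) ∧ (b:ℤ) ∣ u m ∧
        (b:ℤ) * (y:ℤ) = P (m+1) ∧ (x:ℤ) = Q (m+1) ∧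
        2 * (T / 2) = T ∧ v (T/2) = (b:ℤ) ∧ (b:ℤ) ∣ u (T/2) ∧
        ∃ l, m = T/2 + l * T := by
    intro x y hxy
    obtain ⟨m, hm1, hmodd, hvm, hum, hPm, hQm⟩ :=
      s.sol_to (x:ℤ) (y:ℤ) (by positivity) (by positivity) hxy
    obtain ⟨hTe, hvN, huN, l, hl⟩ := s.S_structure m hm1 hvm hum
    exact ⟨m, hm1, hmodd, hvm, hum, hPm, hQm, hTe, hvN, huN, l, hl⟩
  have hCof : ∀ m l, Odd m → m = T/2 + l * T → 2 * (T/2) = T → T % 4 = 2 := by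
    intro m l hodd hml hTe
    obtain ⟨t, ht⟩ := hodd
    have h8 : l * T = l * (2 * (T/2)) := congrArg (l * ·) hTe.symm
    have h9 : l * (2 * (T/2)) = 2 * (l * (T/2)) := by ring
    omega
  have hNodd : T % 4 = 2 → Odd (T/2) := by
    intro h
    rcases Nat.even_or_odd (T/2) with he | ho
    · exfalso
      obtain ⟨w, hw⟩ := he
      omega
    · exact ho
  constructor
  · constructor
    · rintro ⟨x, y, hxy⟩
      obtain ⟨m, hm1, hmodd, hvm, hum, hPm, hQm, hTe, hvN, huN, l, hl⟩ := main_to x y hxy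
      refine ⟨hCof m l hmodd hl hTe, hvN, ?_⟩
      rw [hvN]
      exact huN
    · rintro ⟨hmod, hvN, hdvd⟩
      have hN1 : 1 ≤ T / 2 := by omega
      have hNodd' : Odd (T/2) := hNodd hmod
      have hub : (b:ℤ) ∣ u (T/2) := by rw [← hvN]; exact hdvd
      obtain ⟨y, hyP, hyeq, hy1⟩ := s.sol_of (T/2) hN1 hNodd' hvN hub
      have hQpos := s.Qpos (T/2 - 1)
      have hQQ : 1 ≤ Q (T/2 + 1) := by
        have : T/2 - 1 + 2 = T/2 + 1 := by omega
        rw [← this]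
        exact hQpos
      refine ⟨(Q (T/2 + 1)).toNat, y.toNat, ?_⟩
      have e1 : ((Q (T/2+1)).toNat : ℤ) = Q (T/2+1) := Int.toNat_of_nonneg (by omega)
      have e2 : ((y.toNat : ℕ) : ℤ) = y := Int.toNat_of_nonneg (by omega)
      rw [e1, e2]
      exact hyeq
  · rintro ⟨hmod, hvN, hdvd⟩ x y
    have hN1 : 1 ≤ T / 2 := by omega
    have hNodd' : Odd (T/2) := hNodd hmod
    constructor
    · intro hxy
      obtain ⟨m, hm1, hmodd, hvm, hum, hPm, hQm, hTe, hvN', huN, l, hl⟩ := main_to x y hxy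
      refine ⟨l, ?_, ?_, ?_⟩
      · rw [← hl]
        exact ⟨(y:ℤ), hPm.symm⟩
      · rw [← hl]
        exact hQm
      · rw [← hl]
        exact hPm
    · rintro ⟨l, hdl, hxl, hyl⟩
      have hveq : v (T/2 + l*T) = (b:ℤ) := by
        have h5 := (s.uv_per_mul l (T/2)).2
        rw [hsv, hsT] at h5
        rw [h5]
        exact hvN
      have hnodd : Odd (T/2 + l*T) := by
        obtain ⟨t, ht⟩ := hNodd'
        have hTe : 2 * (T/2) = T := by omega
        have h8 : l * T = l * (2 * (T/2)) := congrArg (l * ·) hTe.symm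
        have h9 : l * (2 * (T/2)) = 2 * (l * (T/2)) := by ring
        exact ⟨t + l * (T/2), by omega⟩
      have hk := s.key (T/2 + l*T)
      have hsd : ((s.d : ℕ) : ℤ) = ((d : ℕ) : ℤ) := rfl
      rw [hsP, hsQ, hsv, hsd] at hk
      rw [hveq, Odd.neg_one_pow hnodd] at hk
      rw [← hyl, ← hxl] at hk
      have hdd : ((d:ℕ):ℤ) = ((a:ℕ):ℤ) * ((b:ℕ):ℤ) := by exact_mod_cast hdab
      have hbne : ((b:ℕ):ℤ) ≠ 0 := by exact_mod_cast (by omega : b ≠ 0)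
      have h2 : ((b:ℕ):ℤ) * ((a:ℤ) * (x:ℤ)^2 - (b:ℤ) * (y:ℤ)^2) = ((b:ℕ):ℤ) * 1 := by
        linear_combination (-1:ℤ) * hk - ((x:ℤ))^2 * hdd
      exact mul_left_cancel₀ hbne h2
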